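/- arXiv:2111.08641 — 14 statements merged into one kernel-verified Lean document; each statement's English description precedes it below -/
import Mathlib

section
/- For every prime p and all nonnegative integers n and k with k < p, the binomial coefficient C(pn+k, 2*(pn+k) choose pn+k) satisfies binom(2(pn+k), pn+k) ≡ binom(2n,n) * binom(2k,k) (mod p). That is, the central binomial coefficients A(n) = binom(2n,n) satisfy the Lucas congruence A(pn+k) ≡ A(n)·A(k) (mod p). -/
theorem central_binom_lucas (p : ℕ) (hp : p.Prime) (n k : ℕ) (hk : k < p) :
    (((2 * (p * n + k)).choose (p * n + k) : ℤ)) ≡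
      ((2 * n).choose n : ℤ) * ((2 * k).choose k : ℤ) [ZMOD p] := by
  haveI : Fact p.Prime := ⟨hp⟩
  have hp0 : 0 < p := hp.pos
  have h1 := Choose.choose_modEq_choose_mod_mul_choose_div
    (p := p) (n := 2 * (p * n + k)) (k := p * n + k)
  have h2 := Choose.choose_modEq_choose_mod_mul_choose_div
    (p := p) (n := 2 * k) (k := k)
  have hKmod : (p * n + k) % p = k := by
    simp [Nat.mul_add_mod, Nat.mod_eq_of_lt hk]
  have hKdiv : (p * n + k) / p = n := by
    rw [Nat.mul_add_div hp0, Nat.div_eq_of_lt hk]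
    omega
  have hNmod : (2 * (p * n + k)) % p = (2 * k) % p := by
    have h2 : 2 * (p * n + k) = p * (2 * n) + 2 * k := by ring
    rw [h2, Nat.mul_add_mod]
  have hNdiv : (2 * (p * n + k)) / p = 2 * n + (2 * k) / p := by
    have : 2 * (p * n + k) = p * (2 * n) + 2 * k := by ring
    rw [this, Nat.mul_add_div hp0]
  rw [hKmod, hKdiv, hNmod, hNdiv] at h1
  have hkmod : k % p = k := Nat.mod_eq_of_lt hk
  rw [hkmod] at h2
  rcases lt_or_ge (2 * k) p with h | h
  · rw [Nat.mod_eq_of_lt h, Nat.div_eq_of_lt h] at h1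
    simpa [mul_comm] using h1
  · have hdiv : (2 * k) / p = 1 := Nat.div_eq_of_lt_le (by omega) (by omega)
    have hmodlt : (2 * k) % p < k := by
      have := Nat.mod_add_div (2 * k) p
      rw [hdiv] at this
      omega
    have hz : ((2 * k) % p).choose k = 0 := Nat.choose_eq_zero_of_lt hmodlt
    rw [hdiv, hz] at h1 h2
    simp at h1 h2
    calc (((2 * (p * n + k)).choose (p * n + k) : ℤ)) ≡ 0 [ZMOD p] := h1
      _ ≡ ((2 * n).choose n : ℤ) * ((2 * k).choose k : ℤ) [ZMOD p] := by
          have : ((2 * k).choose k : ℤ) ≡ 0 [ZMOD p] := h2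
          calc (0 : ℤ) = ((2 * n).choose n : ℤ) * 0 := by ring
            _ ≡ ((2 * n).choose n : ℤ) * ((2 * k).choose k : ℤ) [ZMOD p] :=
              (Int.ModEq.mul_left _ this.symm)
end

section
/- Let T(n) denote the central trinomial coefficients, i.e. T(n) is the constant term (coefficient of x^0) of (x^{-1} + 1 + x)^n, equivalently T(n) = Σ_{k=0}^{⌊n/2⌋} binom(n, 2k)·binom(2k, k). Then for every prime p, every n ≥ 0 and every k with 0 ≤ k ≤ p−1, T(pn+k) ≡ T(n)·T(k) (mod p). -/
/-- The central trinomial coefficients. -/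
def centralTrinomial (n : ℕ) : ℕ :=
  ∑ k ∈ Finset.range (n / 2 + 1), n.choose (2 * k) * (2 * k).choose k

lemma centralTrinomial_sum (n : ℕ) :
    centralTrinomial n = ∑ j ∈ Finset.range (n + 1), n.choose j * j.choose (n - j) := by
  calc centralTrinomial n
      = ∑ j ∈ Finset.range (n / 2 + 1), n.choose (n - j) * (n - j).choose j := by
        refine Finset.sum_congr rfl fun j hj => ?_
        simp only [Finset.mem_range] at hj
        have h2 : 2 * j ≤ n := by omega
        rw [Nat.choose_mul (n := n) (by omega : j ≤ 2 * j),
          Nat.choose_symm (by omega : j ≤ n), (by omega : 2 * j - j = j)]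
    _ = ∑ j ∈ Finset.range (n + 1), n.choose (n - j) * (n - j).choose j := by
        refine Finset.sum_subset (Finset.range_subset_range.2 (by omega)) fun x hx hx2 => ?_
        simp only [Finset.mem_range] at hx hx2
        rw [Nat.choose_eq_zero_of_lt (by omega : n - x < x), mul_zero]
    _ = ∑ j ∈ Finset.range (n + 1), n.choose j * j.choose (n - j) := by
        rw [← Finset.sum_range_reflect (fun j => n.choose j * j.choose (n - j)) (n + 1)]
        refine Finset.sum_congr rfl fun j hj => ?_
        simp only [Finset.mem_range] at hj
        have : n + 1 - 1 - j = n - j := by omega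
        rw [this, (by omega : n - (n - j) = j)]

open Polynomial in
lemma coeff_trinomial_pow (R : Type*) [CommSemiring R] (n : ℕ) :
    ((1 + X + X ^ 2 : R[X]) ^ n).coeff n = (centralTrinomial n : R) := by
  have h : (1 + X + X ^ 2 : R[X]) = X * (1 + X) + 1 := by ring
  rw [h, add_pow]
  simp only [one_pow, mul_one, mul_pow, finset_sum_coeff, coeff_mul_natCast]
  have hterm : ∀ k ∈ Finset.range (n + 1),
      (X ^ k * (1 + X) ^ k : R[X]).coeff n * (n.choose k : R)
        = ((n.choose k * k.choose (n - k) : ℕ) : R) := by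
    intro k hk
    simp only [Finset.mem_range] at hk
    have hx : (X ^ k * (1 + X) ^ k : R[X]).coeff n = ((1 + X : R[X]) ^ k).coeff (n - k) := by
      conv_lhs => rw [(by omega : n = (n - k) + k)]
      exact coeff_X_pow_mul _ _ _
    rw [hx, coeff_one_add_X_pow]
    push_cast
    ring
  rw [Finset.sum_congr rfl hterm, ← Nat.cast_sum, centralTrinomial_sum]

open Polynomial in
theorem central_trinomial_lucas (p : ℕ) (hp : p.Prime) (n k : ℕ) (hk : k < p) :
    (centralTrinomial (p * n + k) : ℤ) ≡
      (centralTrinomial n : ℤ) * (centralTrinomial k : ℤ) [ZMOD p] := by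
  haveI : Fact p.Prime := ⟨hp⟩
  rw [← ZMod.intCast_eq_intCast_iff]
  push_cast
  have hq : (1 + X + X ^ 2 : (ZMod p)[X]) ^ p = expand (ZMod p) p (1 + X + X ^ 2) := by
    rw [← Polynomial.map_frobenius_expand p (1 + X + X ^ 2 : (ZMod p)[X]), ZMod.frobenius_zmod,
      Polynomial.map_id]
  have hdeg : ∀ j : ℕ, ((1 + X + X ^ 2 : (ZMod p)[X]) ^ j).natDegree ≤ 2 * j := by
    intro j
    calc ((1 + X + X ^ 2 : (ZMod p)[X]) ^ j).natDegree
        ≤ j * (1 + X + X ^ 2 : (ZMod p)[X]).natDegree := natDegree_pow_le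
      _ ≤ j * 2 := Nat.mul_le_mul_left j (by compute_degree)
      _ = 2 * j := Nat.mul_comm _ _
  have key : ((1 + X + X ^ 2 : (ZMod p)[X]) ^ (p * n + k)).coeff (p * n + k)
      = ((1 + X + X ^ 2 : (ZMod p)[X]) ^ n).coeff n
        * ((1 + X + X ^ 2 : (ZMod p)[X]) ^ k).coeff k := by
    rw [pow_add, pow_mul, hq, ← map_pow, Polynomial.coeff_mul,
      Finset.sum_eq_single ((p * n, k) : ℕ × ℕ)]
    · rw [Polynomial.coeff_expand_mul' hp.pos]
    · intro b hb hne
      rw [Finset.HasAntidiagonal.mem_antidiagonal] at hb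
      by_cases hd : p ∣ b.1
      · obtain ⟨m, hm⟩ := hd
        have hmn : m ≤ n := by
          by_contra hc
          have h1 : p * n + p ≤ p * m := by
            have := Nat.mul_le_mul_left p (by omega : n + 1 ≤ m)
            rwa [Nat.mul_succ] at this
          omega
        have hmn' : m ≠ n := by
          intro h
          apply hne
          subst h
          exact Prod.ext_iff.2 ⟨by omega, by omega⟩
        have hle : p * m + p ≤ p * n := by
          have := Nat.mul_le_mul_left p (by omega : m + 1 ≤ n)
          rwa [Nat.mul_succ] at this
        have hb2 : 2 * k < b.2 := by omega
        rw [Polynomial.coeff_eq_zero_of_natDegree_lt (lt_of_le_of_lt (hdeg k) hb2), mul_zero]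
      · rw [Polynomial.coeff_expand hp.pos, if_neg hd, zero_mul]
    · intro h
      simp [Finset.mem_antidiagonal] at h
  rw [coeff_trinomial_pow, coeff_trinomial_pow, coeff_trinomial_pow] at key
  exact_mod_cast key
end

section
/- Define the generalized central trinomial numbers T_{a,b,c}(n) = Σ_{k=0}^{⌊n/2⌋} binom(n,2k)·binom(2k,k)·(ac)^k·b^{n−2k} for integers a,b,c. Then for every prime p, every n ≥ 0 and every k with 0 ≤ k ≤ p−1, T_{a,b,c}(pn+k) ≡ T_{a,b,c}(n)·T_{a,b,c}(k) (mod p). -/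
open Polynomial Finset

variable {R : Type*} [CommRing R]

lemma coeff_lin_pow (a c : R) (m t : ℕ) :
    ((C a * X + C c) ^ m).coeff t =
      if t ≤ m then (m.choose t : R) * a ^ t * c ^ (m - t) else 0 := by
  have key : ∀ j, (C a * X)^j * (C c)^(m-j) * ((m.choose j : ℕ) : R[X]) =
      C ((m.choose j : R)) * (C (a^j) * (C (c^(m-j)) * X^j)) := by
    intro j
    rw [mul_pow, ← C_pow, ← C_pow, ← C_eq_natCast]
    ring
  rw [add_pow]
  simp only [finset_sum_coeff, key, coeff_C_mul, coeff_X_pow]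
  rw [Finset.sum_eq_single t]
  · rw [if_pos rfl]
    split_ifs with h
    · simp; ring
    · rw [Nat.choose_eq_zero_of_lt (by omega)]; simp
  · intro j hj hne; simp [hne.symm]
  · intro h
    simp only [Finset.mem_range, not_lt] at h
    rw [Nat.choose_eq_zero_of_lt (by omega)]
    simp

lemma coeff_quad_pow (a c : R) (m t : ℕ) :
    ((C a * X^2 + C c) ^ m).coeff t =
      if 2 ∣ t ∧ t / 2 ≤ m then (m.choose (t/2) : R) * a ^ (t/2) * c ^ (m - t/2) else 0 := by
  have h1 : expand R 2 (C a * X + C c) = (C a * X^2 + C c : R[X]) := by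
    rw [map_add, map_mul, expand_C, expand_X, expand_C]
  rw [← h1, ← map_pow, coeff_expand (by norm_num)]
  rw [coeff_lin_pow]
  split_ifs with h h2 h3 <;> first | rfl | (exfalso; omega) | (exfalso; tauto)

lemma coeff_trin_central (a b c : R) (n : ℕ) :
    ((C a * X^2 + C b * X + C c) ^ n).coeff n =
      ∑ k ∈ Finset.range (n / 2 + 1),
        (n.choose (2 * k) : R) * ((2 * k).choose k : R) * (a * c) ^ k * b ^ (n - 2 * k) := by
  have hre : (C a * X^2 + C b * X + C c : R[X]) = C b * X + (C a * X^2 + C c) := by ring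
  have key : ∀ i, (C b * X)^i * (C a * X^2 + C c)^(n-i) * ((n.choose i : ℕ) : R[X]) =
      C ((n.choose i : R) * b^i) * ((C a * X^2 + C c)^(n-i) * X^i) := by
    intro i
    rw [mul_pow, ← C_pow, ← C_eq_natCast, C_mul]
    ring
  rw [hre, add_pow]
  simp only [finset_sum_coeff, key, coeff_C_mul, coeff_mul_X_pow']
  have step : ∀ i ∈ Finset.range (n+1),
      (n.choose i : R) * b^i * (if i ≤ n then ((C a * X^2 + C c)^(n-i)).coeff (n-i) else 0)
      = if 2 ∣ (n - i) then (n.choose i : R) * b^i *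
          (((n-i).choose ((n-i)/2) : R) * (a*c)^((n-i)/2)) else 0 := by
    intro i hi
    simp only [Finset.mem_range] at hi
    rw [if_pos (by omega), coeff_quad_pow]
    have hle : (n-i)/2 ≤ n - i := Nat.div_le_self _ _
    split_ifs with h h2 h3
    · obtain ⟨j, hj⟩ := h.1
      have : (n - i) - (n-i)/2 = (n-i)/2 := by omega
      rw [this, mul_pow]
      ring
    · exfalso; exact h2 h.1
    · exfalso; exact h ⟨h3, hle⟩
    · ring
  rw [Finset.sum_congr rfl step]
  rw [Finset.sum_ite, Finset.sum_const_zero, add_zero]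
  refine Finset.sum_nbij' (fun i => (n - i)/2) (fun k => n - 2*k) ?_ ?_ ?_ ?_ ?_
  · intro i hi
    simp only [Finset.mem_filter, Finset.mem_range] at hi ⊢
    omega
  · intro k hk
    simp only [Finset.mem_filter, Finset.mem_range] at hk ⊢
    omega
  · intro i hi
    simp only [Finset.mem_filter, Finset.mem_range] at hi
    show n - 2 * ((n - i) / 2) = i
    omega
  · intro k hk
    simp only [Finset.mem_range] at hk
    show (n - (n - 2 * k)) / 2 = k
    omega
  · intro i hi
    simp only [Finset.mem_filter, Finset.mem_range] at hi
    obtain ⟨hi1, hdvd⟩ := hi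
    show _ = (n.choose (2 * ((n-i)/2)) : R) * (((2 * ((n-i)/2)).choose ((n-i)/2)) : R)
        * (a*c)^((n-i)/2) * b^(n - 2 * ((n-i)/2))
    have h1 : 2 * ((n-i)/2) = n - i := by omega
    have h2 : n - 2 * ((n-i)/2) = i := by omega
    rw [h1, Nat.choose_symm (show i ≤ n by omega),
      show n - (n - i) = i by omega]
    ring

lemma pow_card_eq_expand (p : ℕ) [hF : Fact p.Prime] (f : (ZMod p)[X]) :
    f ^ p = Polynomial.expand (ZMod p) p f := by
  rw [← Polynomial.map_frobenius_expand p f]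
  have : frobenius (ZMod p) p = RingHom.id _ := by
    ext x; simp [frobenius_def, ZMod.pow_card]
  rw [this, map_id]

lemma coeff_expand_mul_special (p : ℕ) (hp : p.Prime) (n k : ℕ) (hk : k < p)
    (g h : (ZMod p)[X]) (hh : h.natDegree ≤ 2 * k) :
    ((Polynomial.expand (ZMod p) p g) * h).coeff (p * n + k) = g.coeff n * h.coeff k := by
  rw [coeff_mul]
  rw [Finset.sum_eq_single (p * n, k)]
  · rw [coeff_expand hp.pos, if_pos ⟨n, rfl⟩,
      Nat.mul_div_cancel_left n hp.pos]
  · rintro ⟨x, y⟩ hxy hne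
    simp only [Finset.HasAntidiagonal.mem_antidiagonal] at hxy
    rw [coeff_expand hp.pos]
    by_cases hdvd : p ∣ x
    · rw [if_pos hdvd]
      obtain ⟨m, rfl⟩ := hdvd
      have hmn : m ≤ n := by
        by_contra hc
        push_neg at hc
        have h1 : p * (n + 1) ≤ p * m := Nat.mul_le_mul_left p hc
        have h2 : p * (n + 1) = p * n + p := by ring
        omega
      rcases Nat.lt_or_ge m n with hlt | hge
      · -- y = p*(n-m)+k ≥ p + k > 2k
        have hy : y = p * (n - m) + k := by
          have := Nat.mul_le_mul_left p (le_of_lt hlt)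
          have h2 : p * n = p * m + p * (n - m) := by
            rw [← Nat.mul_add]
            congr 1
            omega
          omega
        have hy2 : 2 * k < y := by
          have h1 : 1 ≤ n - m := by omega
          have := Nat.mul_le_mul_left p h1
          omega
        rw [Polynomial.coeff_eq_zero_of_natDegree_lt (lt_of_le_of_lt hh hy2), mul_zero]
      · have hm : m = n := le_antisymm hmn hge
        subst hm
        have : y = k := by omega
        subst this
        exact absurd rfl hne
    · rw [if_neg hdvd, zero_mul]
  · intro hmem
    simp [Finset.HasAntidiagonal.mem_antidiagonal] at hmem

/-- The generalized central trinomial numbers `T_{a,b,c}(n)`. -/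
def genTrinomial (a b c : ℤ) (n : ℕ) : ℤ :=
  ∑ k ∈ Finset.range (n / 2 + 1),
    (n.choose (2 * k) : ℤ) * ((2 * k).choose k : ℤ) * (a * c) ^ k * b ^ (n - 2 * k)

lemma cast_genTrinomial (p : ℕ) (a b c : ℤ) (N : ℕ) :
    ((genTrinomial a b c N : ℤ) : ZMod p) =
      (((C (a : ZMod p) * X ^ 2 + C (b : ZMod p) * X + C (c : ZMod p)) ^ N).coeff N) := by
  rw [coeff_trin_central]
  unfold genTrinomial
  push_cast
  rfl

theorem gen_trinomial_lucas (a b c : ℤ) (p : ℕ) (hp : p.Prime) (n k : ℕ) (hk : k < p) :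
    genTrinomial a b c (p * n + k) ≡
      genTrinomial a b c n * genTrinomial a b c k [ZMOD p] := by
  haveI : Fact p.Prime := ⟨hp⟩
  rw [← ZMod.intCast_eq_intCast_iff]
  push_cast [cast_genTrinomial]
  set F : (ZMod p)[X] := C (a : ZMod p) * X ^ 2 + C (b : ZMod p) * X + C (c : ZMod p) with hF
  have hdF : F.natDegree ≤ 2 := by
    rw [hF]
    compute_degree
  have hdeg : (F ^ k).natDegree ≤ 2 * k :=
    calc (F ^ k).natDegree ≤ k * F.natDegree := natDegree_pow_le
      _ ≤ k * 2 := Nat.mul_le_mul_left k hdF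
      _ = 2 * k := by ring
  have hsplit : F ^ (p * n + k) = Polynomial.expand (ZMod p) p (F ^ n) * F ^ k := by
    rw [pow_add, pow_mul, pow_card_eq_expand, ← map_pow]
  rw [hsplit, coeff_expand_mul_special p hp n k hk _ _ hdeg]
end

section
/- Let S(n) = Σ_{k=0}^{n} binom(n,k)^2 · binom(n−k, k). Then for every prime p, every n ≥ 0 and every k with 0 ≤ k ≤ p−1, S(pn+k) ≡ S(n)·S(k) (mod p). -/
/-- `S(n) = Σ_{k=0}^n binom(n,k)^2 binom(n-k,k)`. -/
def Sseq (n : ℕ) : ℕ :=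
  ∑ k ∈ Finset.range (n + 1), n.choose k ^ 2 * (n - k).choose k

/-- Lucas for one digit: `C(pM+r, pA+B) ≡ C(M,A) C(r,B) (mod p)` when `r, B < p`. -/
lemma lucas_digit (p M r A B : ℕ) [Fact p.Prime] (hr : r < p) (hB : B < p) :
    ((p * M + r).choose (p * A + B) : ZMod p) = (M.choose A : ZMod p) * (r.choose B : ZMod p) := by
  have hp : 0 < p := Fact.out (p := p.Prime) |>.pos
  have h := Choose.choose_modEq_choose_mod_mul_choose_div (p := p) (n := p * M + r)
    (k := p * A + B)
  have h1 : (p * M + r) % p = r := by rw [Nat.mul_add_mod, Nat.mod_eq_of_lt hr]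
  have h2 : (p * M + r) / p = M := by
    rw [Nat.mul_add_div hp, Nat.div_eq_of_lt hr, add_zero]
  have h3 : (p * A + B) % p = B := by rw [Nat.mul_add_mod, Nat.mod_eq_of_lt hB]
  have h4 : (p * A + B) / p = A := by
    rw [Nat.mul_add_div hp, Nat.div_eq_of_lt hB, add_zero]
  rw [h1, h2, h3, h4] at h
  have := (ZMod.intCast_eq_intCast_iff _ _ _).mpr h
  push_cast at this
  rw [this]; ring


theorem Sseq_lucas (p : ℕ) (hp : p.Prime) (n k : ℕ) (hk : k < p) :
    (Sseq (p * n + k) : ℤ) ≡ (Sseq n : ℤ) * (Sseq k : ℤ) [ZMOD p] := by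
  haveI : Fact p.Prime := ⟨hp⟩
  have hp0 : 0 < p := hp.pos
  rw [← ZMod.intCast_eq_intCast_iff]
  push_cast
  unfold Sseq
  push_cast
  set N := p * n + k with hN
  -- Step 1: extend the sum to `range (p * (n+1))`
  have hNle : N + 1 ≤ p * (n + 1) := by
    have : N < p * (n + 1) := by
      rw [hN, Nat.mul_add, Nat.mul_one]
      omega
    omega
  have hext : ∑ j ∈ Finset.range (N + 1),
        ((N.choose j : ZMod p) ^ 2 * ((N - j).choose j : ZMod p)) =
      ∑ j ∈ Finset.range (p * (n + 1)),
        ((N.choose j : ZMod p) ^ 2 * ((N - j).choose j : ZMod p)) := by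
    apply Finset.sum_subset (Finset.range_subset_range.mpr hNle)
    intro j hj hj'
    simp only [Finset.mem_range, not_lt] at hj hj'
    rw [Nat.choose_eq_zero_of_lt (by omega)]
    push_cast
    ring
  rw [hext]
  -- Step 2: reindex `j = p*a + b`
  have hreindex : ∑ j ∈ Finset.range (p * (n + 1)),
        ((N.choose j : ZMod p) ^ 2 * ((N - j).choose j : ZMod p)) =
      ∑ x ∈ Finset.range (n + 1) ×ˢ Finset.range p,
        ((N.choose (p * x.1 + x.2) : ZMod p) ^ 2 *
          ((N - (p * x.1 + x.2)).choose (p * x.1 + x.2) : ZMod p)) := by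
    apply Finset.sum_nbij' (fun j => (j / p, j % p)) (fun x => p * x.1 + x.2)
    · intro j hj
      simp only [Finset.mem_range] at hj
      simp only [Finset.mem_product, Finset.mem_range]
      constructor
      · exact Nat.lt_succ_of_le (Nat.le_of_lt_succ (by
          have := Nat.div_lt_of_lt_mul (by rw [mul_comm] at hj ⊢; exact hj)
          omega))
      · exact Nat.mod_lt _ hp0
    · intro x hx
      simp only [Finset.mem_product, Finset.mem_range] at hx
      simp only [Finset.mem_range]
      calc p * x.1 + x.2 < p * x.1 + p := by omega
        _ ≤ p * (n + 1) := by
            rw [← Nat.mul_succ]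
            exact Nat.mul_le_mul_left p hx.1
    · intro j hj
      simp [Nat.div_add_mod, Nat.mod_add_div]
    · intro x hx
      simp only [Finset.mem_product, Finset.mem_range] at hx
      ext
      · simp [Nat.mul_add_div hp0, Nat.div_eq_of_lt hx.2]
      · simp [Nat.mul_add_mod, Nat.mod_eq_of_lt hx.2]
    · intro j hj
      simp [Nat.div_add_mod]
  rw [hreindex]
  -- Step 3: per-term congruence
  have hterm : ∀ x ∈ Finset.range (n + 1) ×ˢ Finset.range p,
      ((N.choose (p * x.1 + x.2) : ZMod p) ^ 2 *
          ((N - (p * x.1 + x.2)).choose (p * x.1 + x.2) : ZMod p)) =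
      ((n.choose x.1 : ZMod p) ^ 2 * ((n - x.1).choose x.1 : ZMod p)) *
        ((k.choose x.2 : ZMod p) ^ 2 * ((k - x.2).choose x.2 : ZMod p)) := by
    rintro ⟨a, b⟩ hx
    simp only [Finset.mem_product, Finset.mem_range] at hx
    obtain ⟨ha, hb⟩ := hx
    have ha' : a ≤ n := Nat.lt_succ_iff.mp ha
    have hfirst : (N.choose (p * a + b) : ZMod p) = (n.choose a : ZMod p) * (k.choose b : ZMod p) :=
      lucas_digit p n k a b hk hb
    by_cases hbk : b ≤ k
    · have hsub : N - (p * a + b) = p * (n - a) + (k - b) := by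
        have h1 : p * (n - a) + (k - b) + (p * a + b) = N := by
          rw [hN]
          have e1 : p * (n - a) + p * a = p * n := by
            rw [← Nat.mul_add, Nat.sub_add_cancel ha']
          have e2 : (k - b) + b = k := Nat.sub_add_cancel hbk
          omega
        omega
      rw [hfirst, hsub, lucas_digit p (n - a) (k - b) a b (by omega) hb]
      ring
    · have hkb : (k.choose b : ZMod p) = 0 := by
        rw [Nat.choose_eq_zero_of_lt (by omega)]; push_cast; rfl
      rw [hfirst, hkb]
      ring
  rw [Finset.sum_congr rfl hterm]
  -- Step 4: split the product sum
  rw [Finset.sum_product]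
  have hbext : (∑ b ∈ Finset.range (k + 1),
        ((k.choose b : ZMod p) ^ 2 * ((k - b).choose b : ZMod p))) =
      ∑ b ∈ Finset.range p, ((k.choose b : ZMod p) ^ 2 * ((k - b).choose b : ZMod p)) := by
    apply Finset.sum_subset (Finset.range_subset_range.mpr (by omega : k + 1 ≤ p))
    intro b hb hb'
    simp only [Finset.mem_range, not_lt] at hb hb'
    rw [Nat.choose_eq_zero_of_lt (by omega)]
    push_cast
    ring
  rw [hbext, Finset.sum_mul_sum]
end

section
/- Let S(n) = Σ_{k=0}^{n} binom(n,k)^2 · binom(n−k, k). Then S(n) is odd for every nonnegative integer n. -/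
open Polynomial Finset

noncomputable def qq : Polynomial (ZMod 2) := 1 + X + X^2

lemma qq_coeff : ∀ j, qq.coeff j = if j = 0 ∨ j = 1 ∨ j = 2 then 1 else 0 := by
  intro j
  simp only [qq, coeff_add, coeff_one, coeff_X, coeff_X_pow]
  rcases j with _|_|_|j <;> simp

lemma frob_id : frobenius (ZMod 2) 2 = RingHom.id (ZMod 2) := by
  ext x; revert x; decide

lemma sq_eq_expand (f : Polynomial (ZMod 2)) : f ^ 2 = expand (ZMod 2) 2 f := by
  have h := Polynomial.map_frobenius_expand (p := 2) f
  rw [frob_id, Polynomial.map_id] at h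
  exact h.symm

lemma trinomial_coeff : ∀ n, (qq ^ n).coeff n = 1 := by
  intro n
  induction n using Nat.strong_induction_on with
  | _ n ih =>
    match n with
    | 0 => simp
    | (m+1) =>
      rcases Nat.even_or_odd (m+1) with ⟨c, hc⟩ | ⟨c, hc⟩
      · have hc' : m + 1 = 2 * c := by omega
        rw [hc', pow_mul', sq_eq_expand, Polynomial.coeff_expand (by norm_num)]
        simp only [Nat.mul_div_cancel_left, dvd_mul_right, if_true]
        rw [Nat.mul_div_cancel_left c (by norm_num)]
        exact ih c (by omega)
      · have hc' : m + 1 = 2 * c + 1 := by omega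
        rw [hc', show qq ^ (2*c+1) = qq * (qq^c)^2 by ring, sq_eq_expand,
          Polynomial.coeff_mul]
        rw [Finset.sum_eq_single_of_mem ((1 : ℕ), 2*c)]
        · rw [Polynomial.coeff_expand (by norm_num)]
          simp only [dvd_mul_right, if_true, Nat.mul_div_cancel_left c (by norm_num : 0 < 2)]
          rw [ih c (by omega), qq_coeff]
          simp
        · rw [Finset.HasAntidiagonal.mem_antidiagonal]; omega
        · rintro ⟨i, j⟩ hmem hne
          simp only [Finset.HasAntidiagonal.mem_antidiagonal] at hmem
          rw [Polynomial.coeff_expand (by norm_num)]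
          rw [qq_coeff]
          by_cases hi : i = 0 ∨ i = 1 ∨ i = 2
          · have hi1 : i ≠ 1 := by
              intro h; apply hne; simp_all; omega
            have : ¬ (2 ∣ j) := by omega
            simp [this]
          · simp [hi]

lemma coeff_qq_pow (n : ℕ) :
    (qq ^ n).coeff n = ∑ k ∈ Finset.range (n+1), (n.choose k : ZMod 2) * (k.choose (n - k)) := by
  have hq : qq = (X + X^2) + 1 := by unfold qq; ring
  rw [hq, add_pow]
  rw [Polynomial.finset_sum_coeff]
  apply Finset.sum_congr rfl
  intro k hk
  rw [Finset.mem_range] at hk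
  have hX : (X + X^2 : Polynomial (ZMod 2)) ^ k = (X+1)^k * X^k := by
    rw [show (X + X^2 : Polynomial (ZMod 2)) = (X+1) * X by ring, mul_pow]
  rw [one_pow, mul_one, hX, ← Polynomial.C_eq_natCast, Polynomial.coeff_mul_C,
    Polynomial.coeff_mul_X_pow', if_pos (by omega),
    Polynomial.coeff_X_add_one_pow]
  ring

lemma sseq_cast (n : ℕ) :
    ((∑ k ∈ Finset.range (n + 1), n.choose k ^ 2 * (n - k).choose k : ℕ) : ZMod 2) = 1 := by
  push_cast
  have hsq : ∀ a : ZMod 2, a ^ 2 = a := by decide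
  calc (∑ k ∈ Finset.range (n + 1), (n.choose k : ZMod 2) ^ 2 * ((n - k).choose k))
      = ∑ k ∈ Finset.range (n + 1), (n.choose k : ZMod 2) * ((n - k).choose k) := by
        refine Finset.sum_congr rfl fun k _ => by rw [hsq]
    _ = ∑ k ∈ Finset.range (n + 1), (n.choose (n-k) : ZMod 2) * ((n - (n-k)).choose (n-k)) := by
        rw [← Finset.sum_range_reflect]
        refine Finset.sum_congr rfl fun k hk => by simp
    _ = ∑ k ∈ Finset.range (n + 1), (n.choose k : ZMod 2) * (k.choose (n-k)) := by
        refine Finset.sum_congr rfl fun k hk => ?_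
        rw [Finset.mem_range] at hk
        rw [Nat.sub_sub_self (by omega : k ≤ n), Nat.choose_symm (by omega : k ≤ n)]
    _ = 1 := by rw [← coeff_qq_pow, trinomial_coeff]

theorem Sseq_odd (n : ℕ) : Odd (Sseq n) := by
  have hcast : ((Sseq n : ℕ) : ZMod 2) = 1 := sseq_cast n
  rw [Nat.odd_iff]
  rcases Nat.mod_two_eq_zero_or_one (Sseq n) with h0 | h1
  · exfalso
    have h2 : ((Sseq n % 2 : ℕ) : ZMod 2) = 1 := by rw [ZMod.natCast_mod]; exact hcast
    rw [h0] at h2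
    simp at h2
  · exact h1
end

section
/- Let S(n) = Σ_{k=0}^{n} binom(n,k)^2 · binom(n−k, k). Then for every nonnegative integer n, S(n) mod 5 lies in {0, 1, 4}; that is, S(n) ≡ 0, 1, or −1 (mod 5). -/
open Finset

/-- Lucas' theorem, cast to `ZMod 5`. -/
lemma lucas5 (n k : ℕ) :
    ((n.choose k : ZMod 5)) = (n % 5).choose (k % 5) * (n / 5).choose (k / 5) := by
  have : Fact (Nat.Prime 5) := ⟨by norm_num⟩
  have h := Choose.choose_modEq_choose_mod_mul_choose_div_nat (n := n) (k := k) (p := 5)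
  have h2 := (ZMod.natCast_eq_natCast_iff _ _ _).mpr h
  push_cast at h2
  exact h2

lemma term_eval (a b i j : ℕ) (hia : i ≤ a) (hb : b < 5) (hj : j < 5) :
    (((5 * a + b).choose (5 * i + j) ^ 2 * (5 * a + b - (5 * i + j)).choose (5 * i + j) :
      ℕ) : ZMod 5) =
    ((a.choose i ^ 2 * (a - i).choose i : ℕ) : ZMod 5) *
    ((b.choose j ^ 2 * (b - j).choose j : ℕ) : ZMod 5) := by
  have hn1 : (5 * a + b) % 5 = b := by omega
  have hn2 : (5 * a + b) / 5 = a := by omega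
  have hk1 : (5 * i + j) % 5 = j := by omega
  have hk2 : (5 * i + j) / 5 = i := by omega
  push_cast
  rcases le_or_gt j b with hjb | hjb
  · have hsub : 5 * a + b - (5 * i + j) = 5 * (a - i) + (b - j) := by omega
    have hm1 : (5 * (a - i) + (b - j)) % 5 = b - j := by omega
    have hm2 : (5 * (a - i) + (b - j)) / 5 = a - i := by omega
    rw [lucas5 (5 * a + b) (5 * i + j), hsub, lucas5 (5 * (a - i) + (b - j)) (5 * i + j)]
    rw [hn1, hn2, hk1, hk2, hm1, hm2]
    ring
  · have hz : b.choose j = 0 := Nat.choose_eq_zero_of_lt hjb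
    rw [lucas5 (5 * a + b) (5 * i + j), hn1, hn2, hk1, hk2, hz]
    simp

lemma sum_five (b : ℕ) (hb : b < 5) :
    ∑ j ∈ range 5, ((b.choose j ^ 2 * (b - j).choose j : ℕ) : ZMod 5) = (Sseq b : ZMod 5) := by
  rw [Sseq]
  push_cast
  rw [← Finset.sum_subset (Finset.range_subset_range.mpr (by omega : b + 1 ≤ 5))]
  intro x hx hx'
  simp only [mem_range] at hx hx'
  rw [Nat.choose_eq_zero_of_lt (by omega)]
  simp

lemma key (a b : ℕ) (hb : b < 5) :
    ((Sseq (5 * a + b) : ZMod 5)) = (Sseq a : ZMod 5) * (Sseq b : ZMod 5) := by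
  have h1 : ((Sseq (5 * a + b) : ℕ) : ZMod 5) =
      ∑ k ∈ range (5 * (a + 1)), (((5 * a + b).choose k ^ 2 *
        (5 * a + b - k).choose k : ℕ) : ZMod 5) := by
    rw [Sseq]
    push_cast
    rw [← Finset.sum_subset (Finset.range_subset_range.mpr (by omega : 5 * a + b + 1 ≤ 5 * (a + 1)))]
    intro x hx hx'
    simp only [mem_range] at hx hx'
    rw [Nat.choose_eq_zero_of_lt (by omega)]
    simp
  rw [h1]
  have h2 : ∑ k ∈ range (5 * (a + 1)), (((5 * a + b).choose k ^ 2 *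
        (5 * a + b - k).choose k : ℕ) : ZMod 5) =
      ∑ p ∈ range (a + 1) ×ˢ range 5, (((5 * a + b).choose (5 * p.1 + p.2) ^ 2 *
        (5 * a + b - (5 * p.1 + p.2)).choose (5 * p.1 + p.2) : ℕ) : ZMod 5) := by
    refine Finset.sum_nbij' (fun k => (k / 5, k % 5)) (fun p => 5 * p.1 + p.2) ?_ ?_ ?_ ?_ ?_
    · intro k hk
      simp only [mem_range] at hk
      simp only [mem_product, mem_range]
      omega
    · intro p hp
      simp only [mem_product, mem_range] at hp
      simp only [mem_range]
      omega
    · intro k _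
      simp only []
      omega
    · intro p hp
      simp only [mem_product, mem_range] at hp
      ext <;> simp <;> omega
    · intro k _
      simp only []
      have hkk : 5 * (k / 5) + k % 5 = k := by omega
      rw [hkk]
  rw [h2, Finset.sum_product]
  have h3 : ∀ p ∈ range (a + 1) ×ˢ range 5, True := fun _ _ => trivial
  calc ∑ i ∈ range (a + 1), ∑ j ∈ range 5, (((5 * a + b).choose (5 * i + j) ^ 2 *
        (5 * a + b - (5 * i + j)).choose (5 * i + j) : ℕ) : ZMod 5)
      = ∑ i ∈ range (a + 1), ∑ j ∈ range 5,
        ((a.choose i ^ 2 * (a - i).choose i : ℕ) : ZMod 5) *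
        ((b.choose j ^ 2 * (b - j).choose j : ℕ) : ZMod 5) := by
        apply Finset.sum_congr rfl; intro i hi
        apply Finset.sum_congr rfl; intro j hj
        simp only [mem_range] at hi hj
        exact term_eval a b i j (by omega) hb (by omega)
    _ = (∑ i ∈ range (a + 1), ((a.choose i ^ 2 * (a - i).choose i : ℕ) : ZMod 5)) *
        (∑ j ∈ range 5, ((b.choose j ^ 2 * (b - j).choose j : ℕ) : ZMod 5)) := by
        rw [Finset.sum_mul_sum]
    _ = (Sseq a : ZMod 5) * (Sseq b : ZMod 5) := by
        have h4 : ∑ i ∈ range (a + 1), ((a.choose i ^ 2 * (a - i).choose i : ℕ) : ZMod 5) =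
            (Sseq a : ZMod 5) := by
          rw [Sseq]; push_cast; ring
        rw [sum_five b hb, h4]

lemma aux : ∀ n : ℕ, (Sseq n : ZMod 5) = 0 ∨ (Sseq n : ZMod 5) = 1 ∨ (Sseq n : ZMod 5) = 4 := by
  intro n
  induction n using Nat.strong_induction_on with
  | _ n ih =>
    rcases lt_or_ge n 5 with h | h
    · interval_cases n <;> decide
    · have hb : n % 5 < 5 := Nat.mod_lt _ (by norm_num)
      have hn : 5 * (n / 5) + n % 5 = n := by omega
      have hk := key (n / 5) (n % 5) hb
      rw [hn] at hk
      have iha := ih (n / 5) (by omega)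
      have ihb : (Sseq (n % 5) : ZMod 5) = 0 ∨ (Sseq (n % 5) : ZMod 5) = 1 ∨
          (Sseq (n % 5) : ZMod 5) = 4 := by
        interval_cases h : n % 5 <;> decide
      rw [hk]
      rcases iha with h1 | h1 | h1 <;> rcases ihb with h2 | h2 | h2 <;>
        rw [h1, h2] <;> decide

theorem Sseq_mod_five (n : ℕ) : Sseq n % 5 = 0 ∨ Sseq n % 5 = 1 ∨ Sseq n % 5 = 4 := by
  have h := aux n
  have hv : (Sseq n : ZMod 5).val = Sseq n % 5 := ZMod.val_natCast _ _
  rcases h with h | h | h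
  · left; rw [h] at hv; rw [← hv]; rfl
  · right; left; rw [h] at hv; rw [← hv]; rfl
  · right; right; rw [h] at hv; rw [← hv]; rfl
end

section
/- Let S(n) = Σ_{k=0}^{n} binom(n,k)^2 · binom(n−k, k). Then 3 does not divide S(n) for any nonnegative integer n. -/
private instance : Fact (Nat.Prime 3) := ⟨by norm_num⟩

/-- Lucas' theorem for p = 3, stated in `ZMod 3`. -/
lemma lucas3 (n k : ℕ) :
    ((n.choose k : ZMod 3)) =
      ((n % 3).choose (k % 3) : ZMod 3) * ((n / 3).choose (k / 3) : ZMod 3) := by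
  have h := @Choose.choose_modEq_choose_mod_mul_choose_div n k 3 _
  have h2 := (ZMod.intCast_eq_intCast_iff _ _ _).mpr h
  push_cast at h2
  exact_mod_cast h2

/-- termwise Lucas congruence for the summand of `Sseq`. -/
lemma term_eq (a b r s : ℕ) (hr : r < 3) (hs : s < 3) :
    ((((3 * a + r).choose (3 * b + s)) ^ 2 *
        (((3 * a + r) - (3 * b + s)).choose (3 * b + s)) : ℕ) : ZMod 3)
      = (((a.choose b) ^ 2 * ((a - b).choose b) : ℕ) : ZMod 3) *
        (((r.choose s) ^ 2 * ((r - s).choose s) : ℕ) : ZMod 3) := by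
  have hmod : (3 * a + r) % 3 = r := by omega
  have hdiv : (3 * a + r) / 3 = a := by omega
  have hmod' : (3 * b + s) % 3 = s := by omega
  have hdiv' : (3 * b + s) / 3 = b := by omega
  have h1 : (((3 * a + r).choose (3 * b + s) : ℕ) : ZMod 3)
      = ((r.choose s : ℕ) : ZMod 3) * ((a.choose b : ℕ) : ZMod 3) := by
    rw [lucas3, hmod, hdiv, hmod', hdiv']
  by_cases hsr : s ≤ r ∧ b ≤ a
  · obtain ⟨h₁, h₂⟩ := hsr
    have hsub : (3 * a + r) - (3 * b + s) = 3 * (a - b) + (r - s) := by omega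
    have h2 : ((((3 * a + r) - (3 * b + s)).choose (3 * b + s) : ℕ) : ZMod 3)
        = (((r - s).choose s : ℕ) : ZMod 3) * (((a - b).choose b : ℕ) : ZMod 3) := by
      rw [hsub, lucas3]
      have : (3 * (a - b) + (r - s)) % 3 = r - s := by omega
      rw [this]
      have : (3 * (a - b) + (r - s)) / 3 = a - b := by omega
      rw [this, hmod', hdiv']
    push_cast
    push_cast at h1 h2
    rw [h1, h2]
    ring
  · push_cast
    push_cast at h1
    rw [h1]
    rcases not_and_or.mp hsr with h | h
    · have : r.choose s = 0 := Nat.choose_eq_zero_of_lt (by omega)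
      rw [this]
      push_cast
      ring
    · have : a.choose b = 0 := Nat.choose_eq_zero_of_lt (by omega)
      rw [this]
      push_cast
      ring

lemma sum_range_three_mul {M : Type*} [AddCommMonoid M] (m : ℕ) (g : ℕ → M) :
    ∑ k ∈ Finset.range (3 * m), g k
      = ∑ b ∈ Finset.range m, (g (3 * b) + g (3 * b + 1) + g (3 * b + 2)) := by
  induction m with
  | zero => simp
  | succ m ih =>
    have h3 : 3 * (m + 1) = 3 * m + 1 + 1 + 1 := by ring
    rw [h3, Finset.sum_range_succ, Finset.sum_range_succ, Finset.sum_range_succ, ih,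
      Finset.sum_range_succ]
    simp [add_assoc, show 3 * m + 1 + 1 = 3 * m + 2 from rfl]

/-- The summand of `Sseq n`, as a natural number. -/
def Sterm (n k : ℕ) : ℕ := n.choose k ^ 2 * (n - k).choose k

lemma Sseq_sum_ext (n m : ℕ) (h : n + 1 ≤ m) :
    (Sseq n : ℕ) = ∑ k ∈ Finset.range m, Sterm n k := by
  rw [Sseq]
  apply Finset.sum_subset
  · exact Finset.range_subset_range.mpr h
  · intro k _ hk
    simp only [Finset.mem_range, not_lt] at hk
    have : n.choose k = 0 := Nat.choose_eq_zero_of_lt (by omega)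
    simp [Sterm, this]

lemma Sseq_mul (a r : ℕ) (hr : r < 3) :
    ((Sseq (3 * a + r) : ℕ) : ZMod 3) = ((Sseq a : ℕ) : ZMod 3) * ((Sseq r : ℕ) : ZMod 3) := by
  have hext : (Sseq (3 * a + r) : ℕ) = ∑ k ∈ Finset.range (3 * (a + 1)), Sterm (3 * a + r) k :=
    Sseq_sum_ext _ _ (by omega)
  have hextr : (Sseq r : ℕ) = ∑ s ∈ Finset.range 3, Sterm r s :=
    Sseq_sum_ext _ _ (by omega)
  rw [hext, hextr, Nat.cast_sum, Nat.cast_sum, sum_range_three_mul]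
  have key : ∀ b s : ℕ, s < 3 →
      ((Sterm (3 * a + r) (3 * b + s) : ℕ) : ZMod 3)
        = ((Sterm a b : ℕ) : ZMod 3) * ((Sterm r s : ℕ) : ZMod 3) := by
    intro b s hs
    exact term_eq a b r s hr hs
  have hsum : ∀ b : ℕ,
      (((Sterm (3 * a + r) (3 * b) : ℕ) : ZMod 3)
        + ((Sterm (3 * a + r) (3 * b + 1) : ℕ) : ZMod 3)
        + ((Sterm (3 * a + r) (3 * b + 2) : ℕ) : ZMod 3))
        = ((Sterm a b : ℕ) : ZMod 3) *
          (((Sterm r 0 : ℕ) : ZMod 3) + ((Sterm r 1 : ℕ) : ZMod 3)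
            + ((Sterm r 2 : ℕ) : ZMod 3)) := by
    intro b
    have h0 := key b 0 (by omega)
    have h1 := key b 1 (by omega)
    have h2 := key b 2 (by omega)
    rw [show 3 * b + 0 = 3 * b from rfl] at h0
    rw [h0, h1, h2]
    ring
  calc ∑ b ∈ Finset.range (a + 1),
        (((Sterm (3 * a + r) (3 * b) : ℕ) : ZMod 3)
          + ((Sterm (3 * a + r) (3 * b + 1) : ℕ) : ZMod 3)
          + ((Sterm (3 * a + r) (3 * b + 2) : ℕ) : ZMod 3))
      = ∑ b ∈ Finset.range (a + 1), ((Sterm a b : ℕ) : ZMod 3) *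
          (((Sterm r 0 : ℕ) : ZMod 3) + ((Sterm r 1 : ℕ) : ZMod 3)
            + ((Sterm r 2 : ℕ) : ZMod 3)) := by
        exact Finset.sum_congr rfl fun b _ => hsum b
    _ = (∑ b ∈ Finset.range (a + 1), ((Sterm a b : ℕ) : ZMod 3)) *
          (((Sterm r 0 : ℕ) : ZMod 3) + ((Sterm r 1 : ℕ) : ZMod 3)
            + ((Sterm r 2 : ℕ) : ZMod 3)) := by
        rw [Finset.sum_mul]
    _ = ((Sseq a : ℕ) : ZMod 3) *
          (((Sterm r 0 : ℕ) : ZMod 3) + ((Sterm r 1 : ℕ) : ZMod 3)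
            + ((Sterm r 2 : ℕ) : ZMod 3)) := by
        simp only [Sseq, Sterm, Nat.cast_sum]
    _ = _ := by
        rw [Finset.sum_range_succ, Finset.sum_range_succ, Finset.sum_range_one]

lemma Sseq_cast_ne_zero (n : ℕ) : ((Sseq n : ℕ) : ZMod 3) ≠ 0 := by
  induction n using Nat.strong_induction_on with
  | _ n ih =>
    rcases lt_or_ge n 3 with h | h
    · interval_cases n <;> decide
    · have hlt : n % 3 < 3 := Nat.mod_lt _ (by norm_num)
      have he : 3 * (n / 3) + n % 3 = n := by omega
      have := Sseq_mul (n / 3) (n % 3) hlt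
      rw [he] at this
      rw [this]
      apply mul_ne_zero
      · exact ih _ (by omega)
      · have h3 : n % 3 < 3 := hlt
        interval_cases h' : n % 3 <;> decide

theorem Sseq_not_div_three (n : ℕ) : ¬ (3 ∣ Sseq n) := by
  intro hdvd
  exact Sseq_cast_ne_zero n ((ZMod.natCast_eq_zero_iff _ _).mpr hdvd)
end

section
/- Let A(n) = Σ_{k=0}^{n} binom(n,k)^2 · binom(n+k,k)^2 be the Apéry numbers. Then for every prime p, every n ≥ 0, and every k with 0 ≤ k ≤ p−1, A(pn+k) ≡ A(n)·A(k) (mod p). -/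
/-- The Apéry numbers `A(n) = Σ_{k=0}^n binom(n,k)^2 binom(n+k,k)^2`. -/
def apery (n : ℕ) : ℕ :=
  ∑ k ∈ Finset.range (n + 1), n.choose k ^ 2 * (n + k).choose k ^ 2

lemma sum_range_mul_eq {β : Type*} [AddCommMonoid β] (f : ℕ → β) (a b : ℕ) :
    ∑ i ∈ Finset.range (a * b), f i = ∑ m ∈ Finset.range b, ∑ j ∈ Finset.range a, f (a * m + j) := by
  induction b with
  | zero => simp
  | succ b ih =>
    rw [Finset.sum_range_succ, ← ih, Nat.mul_succ,
      ← Finset.sum_range_add_sum_Ico f (Nat.le_add_right (a * b) a)]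
    congr 1
    rw [Finset.sum_Ico_eq_sum_range]
    simp

/-- Lucas' theorem, stated as an equality in `ZMod p`. -/
lemma lucas_zmod (p : ℕ) [Fact p.Prime] (a b : ℕ) :
    ((a.choose b : ZMod p)) = ((a % p).choose (b % p) : ZMod p) * ((a / p).choose (b / p)) := by
  have := @Choose.choose_modEq_choose_mod_mul_choose_div a b p _
  rw [← ZMod.intCast_eq_intCast_iff] at this
  push_cast at this ⊢
  exact this

theorem apery_lucas (p : ℕ) (hp : p.Prime) (n k : ℕ) (hk : k < p) :
    (apery (p * n + k) : ℤ) ≡ (apery n : ℤ) * (apery k : ℤ) [ZMOD p] := by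
  haveI : Fact p.Prime := ⟨hp⟩
  have hp0 : 0 < p := hp.pos
  rw [← ZMod.intCast_eq_intCast_iff]
  push_cast
  -- Goal: (apery (p*n+k) : ZMod p) = apery n * apery k
  show ((apery (p * n + k) : ℕ) : ZMod p) = ((apery n : ℕ) : ZMod p) * ((apery k : ℕ) : ZMod p)
  -- cast apery sums into ZMod p
  have cast_apery : ∀ N : ℕ, ((apery N : ℕ) : ZMod p) =
      ∑ i ∈ Finset.range (N + 1), (N.choose i : ZMod p) ^ 2 * ((N + i).choose i : ZMod p) ^ 2 := by
    intro N; unfold apery; push_cast; rfl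
  rw [cast_apery, cast_apery, cast_apery]
  -- extend the LHS sum to range (p * (n+1))
  have hle : p * n + k + 1 ≤ p * (n + 1) := by
    rw [Nat.mul_succ]; omega
  have extend : ∑ i ∈ Finset.range (p * n + k + 1),
        ((p * n + k).choose i : ZMod p) ^ 2 * ((p * n + k + i).choose i : ZMod p) ^ 2
      = ∑ i ∈ Finset.range (p * (n + 1)),
        ((p * n + k).choose i : ZMod p) ^ 2 * ((p * n + k + i).choose i : ZMod p) ^ 2 := by
    apply Finset.sum_subset
    · exact Finset.range_subset_range.mpr hle
    · intro i _ hi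
      rw [Finset.mem_range, not_lt] at hi
      rw [Nat.choose_eq_zero_of_lt (by omega)]
      push_cast
      ring
  rw [extend, sum_range_mul_eq]
  -- extend the apery k sum to range p
  have extendk : ∑ j ∈ Finset.range (k + 1),
        (k.choose j : ZMod p) ^ 2 * ((k + j).choose j : ZMod p) ^ 2
      = ∑ j ∈ Finset.range p,
        (k.choose j : ZMod p) ^ 2 * ((k + j).choose j : ZMod p) ^ 2 := by
    apply Finset.sum_subset
    · exact Finset.range_subset_range.mpr hk
    · intro j _ hj
      rw [Finset.mem_range, not_lt] at hj
      rw [Nat.choose_eq_zero_of_lt (by omega)]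
      push_cast
      ring
  rw [extendk, Finset.sum_mul_sum]
  apply Finset.sum_congr rfl
  intro m hm
  apply Finset.sum_congr rfl
  intro j hj
  rw [Finset.mem_range] at hm hj
  -- compute the two binomial coefficients via Lucas
  have h1 : (p * n + k) % p = k := by rw [Nat.mul_add_mod, Nat.mod_eq_of_lt hk]
  have h2 : (p * n + k) / p = n := by
    rw [Nat.mul_add_div hp0, Nat.div_eq_of_lt hk]; ring
  have h3 : (p * m + j) % p = j := by rw [Nat.mul_add_mod, Nat.mod_eq_of_lt hj]
  have h4 : (p * m + j) / p = m := by
    rw [Nat.mul_add_div hp0, Nat.div_eq_of_lt hj]; ring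
  have e1 : ((p * n + k).choose (p * m + j) : ZMod p) = (k.choose j : ZMod p) * (n.choose m) := by
    rw [lucas_zmod, h1, h2, h3, h4]
  have h5 : p * n + k + (p * m + j) = p * (n + m) + (k + j) := by ring
  have h6 : (p * (n + m) + (k + j)) % p = (k + j) % p := by
    rw [Nat.mul_add_mod]
  have h7 : (p * (n + m) + (k + j)) / p = n + m + (k + j) / p := by
    rw [Nat.mul_add_div hp0]
  have e2 : ((p * n + k + (p * m + j)).choose (p * m + j) : ZMod p)
      = (((k + j) % p).choose j : ZMod p) * ((n + m + (k + j) / p).choose m) := by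
    rw [h5, lucas_zmod, h6, h7, h3, h4]
  rw [e1, e2]
  -- now compare with the RHS term
  have e3 : ((k + j).choose j : ZMod p)
      = (((k + j) % p).choose j : ZMod p) * (((k + j) / p).choose 0) := by
    have := lucas_zmod p (k + j) j
    rwa [Nat.mod_eq_of_lt hj, Nat.div_eq_of_lt hj] at this
  rw [e3, Nat.choose_zero_right]
  push_cast
  by_cases hcase : k + j < p
  · rw [Nat.div_eq_of_lt hcase]
    ring
  · -- carry case: both sides vanish
    have hmod : (k + j) % p = k + j - p := by
      rw [Nat.mod_eq_sub_mod (by omega), Nat.mod_eq_of_lt (by omega)]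
    have hzero : ((k + j) % p).choose j = 0 := by
      apply Nat.choose_eq_zero_of_lt
      omega
    rw [hzero]
    push_cast
    ring
end

section
/- For every prime p and all integers a, b, c, the constant term of (a x^{-1} + b + c x)^{p−1}, which equals Σ_{k=0}^{⌊(p−1)/2⌋} binom(p−1, 2k)·binom(2k,k)·(ac)^k·b^{p−1−2k}, is congruent modulo p to the Legendre/Kronecker symbol ((b² − 4ac)/p). In particular, for p odd this constant term is congruent to (b² − 4ac)^{(p−1)/2} (mod p). -/
lemma choose_pred_cast (p : ℕ) (hp : p.Prime) (j : ℕ) (hj : j ≤ p - 1) :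
    (((p - 1).choose j : ℕ) : ZMod p) = (-1) ^ j := by
  induction j with
  | zero => simp
  | succ j ih =>
    have hp2 := hp.two_le
    have hj' : j ≤ p - 1 := by omega
    have hpas : p.choose (j + 1) = (p - 1).choose j + (p - 1).choose (j + 1) := by
      conv_lhs => rw [show p = (p - 1) + 1 by omega]
      rw [Nat.choose_succ_succ]
    have hdvd : p ∣ p.choose (j + 1) :=
      hp.dvd_choose_self (Nat.succ_ne_zero j) (by omega)
    have h0 : ((p.choose (j + 1) : ℕ) : ZMod p) = 0 :=
      (ZMod.natCast_eq_zero_iff _ _).mpr hdvd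
    have h1 := congrArg (Nat.cast : ℕ → ZMod p) hpas
    push_cast at h1
    rw [h0, ih hj'] at h1
    have : (((p - 1).choose (j + 1) : ℕ) : ZMod p) = -(-1) ^ j := by
      linear_combination -h1
    rw [this]; ring

lemma central_cast (p : ℕ) (hp : p.Prime) (hodd : Odd p) (k : ℕ) (hk : k ≤ (p - 1) / 2) :
    (((2 * k).choose k : ℕ) : ZMod p) = (-4) ^ k * (((p - 1) / 2).choose k : ℕ) := by
  haveI : Fact p.Prime := ⟨hp⟩
  set m := (p - 1) / 2 with hm
  have hp2 := hp.two_le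
  have hpm : p = 2 * m + 1 := by
    obtain ⟨t, ht⟩ := hodd; omega
  induction k with
  | zero => simp
  | succ k ih =>
    have hk' : k ≤ m := by omega
    have ih' := ih hk'
    have h1 : ((k + 1) * Nat.centralBinom (k + 1) : ℕ) = 2 * (2 * k + 1) * Nat.centralBinom k :=
      Nat.succ_mul_centralBinom_succ k
    have h2 : m.choose (k + 1) * (k + 1) = m.choose k * (m - k) := Nat.choose_succ_right_eq m k
    have H1 := congrArg (Nat.cast : ℕ → ZMod p) h1
    have H2 := congrArg (Nat.cast : ℕ → ZMod p) h2
    rw [Nat.centralBinom, Nat.centralBinom] at H1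
    push_cast at H1
    push_cast [Nat.cast_sub hk'] at H2
    have Hp : (2 * (m : ZMod p) + 1) = 0 := by
      have h : (((2 * m + 1 : ℕ) : ℕ) : ZMod p) = 0 := by
        rw [← hpm]; exact ZMod.natCast_self p
      push_cast at h; linear_combination h
    have hku : ((k : ZMod p) + 1) ≠ 0 := by
      have : (((k + 1 : ℕ) : ℕ) : ZMod p) ≠ 0 := by
        rw [Ne, ZMod.natCast_eq_zero_iff]
        intro h
        exact absurd (Nat.le_of_dvd (by omega) h) (by omega)
      push_cast at this; exact this
    apply mul_left_cancel₀ hku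
    have goal2 : ((k : ZMod p) + 1) * ((2 * (k + 1)).choose (k + 1) : ℕ) =
        ((k : ZMod p) + 1) * ((-4) ^ (k + 1) * (m.choose (k + 1) : ℕ)) := by
      linear_combination H1 + 2 * (2 * (k : ZMod p) + 1) * ih' - (-4) ^ (k + 1) * H2
        + 2 * (-4) ^ k * ((m.choose k : ℕ) : ZMod p) * Hp
    convert goal2 using 3


theorem gen_trinomial_pm1 (p : ℕ) (hp : p.Prime) (a b c : ℤ) :
    (Odd p → genTrinomial a b c (p - 1) ≡ (b ^ 2 - 4 * a * c) ^ ((p - 1) / 2) [ZMOD p]) ∧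
    (p = 2 → genTrinomial a b c (p - 1) ≡ b [ZMOD p]) := by
  constructor
  · intro hodd
    haveI : Fact p.Prime := ⟨hp⟩
    have hp2 := hp.two_le
    set m := (p - 1) / 2 with hm
    have hpm : p - 1 = 2 * m := by
      obtain ⟨t, ht⟩ := hodd; omega
    rw [← ZMod.intCast_eq_intCast_iff]
    unfold genTrinomial
    have hdiv : (p - 1) / 2 = m := hm.symm
    push_cast
    rw [hdiv, hpm]
    have hrhs : ((b : ZMod p) ^ 2 - 4 * a * c) ^ m =
        ∑ k ∈ Finset.range (m + 1),
          (-(4 * (a : ZMod p) * c)) ^ k * ((b : ZMod p) ^ 2) ^ (m - k) * (m.choose k : ℕ) := by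
      rw [show (b : ZMod p) ^ 2 - 4 * a * c = -(4 * (a:ZMod p) * c) + (b:ZMod p) ^ 2 by ring]
      rw [add_pow]
    rw [hrhs]
    apply Finset.sum_congr rfl
    intro k hk
    have hkm : k ≤ m := by
      simpa [Nat.lt_succ_iff] using hk
    have h2k : 2 * k ≤ p - 1 := by omega
    have e1 : (((2 * m).choose (2 * k) : ℕ) : ZMod p) = 1 := by
      have := choose_pred_cast p hp (2 * k) h2k
      rw [hpm] at this
      rw [this]
      simp [pow_mul]
    have e2 : (((2 * k).choose k : ℕ) : ZMod p) = (-4) ^ k * ((m.choose k : ℕ) : ZMod p) := by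
      have := central_cast p hp hodd k (by omega)
      rwa [← hm] at this
    have e3 : 2 * m - 2 * k = 2 * (m - k) := by omega
    rw [e1, e2, e3, pow_mul]
    ring
  · intro h2
    subst h2
    have : genTrinomial a b c 1 = b := by
      simp [genTrinomial]
    rw [this]
end

section
/- For integers a, b, c with c ≠ 0 (working over ℚ), the generalized central trinomial numbers T(n) = Σ_{k=0}^{⌊n/2⌋} binom(n,2k)binom(2k,k)(ac)^k b^{n−2k} satisfy: the coefficient of x^{-1} in (a x^{-1}+b+c x)^n equals (T(n+1) − b·T(n))/(2c). -/
open LaurentPolynomial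

/-- The generalized central trinomial numbers `T_{a,b,c}(n)` over `ℚ`. -/
def genTrinomialQ (a b c : ℤ) (n : ℕ) : ℚ :=
  ∑ k ∈ Finset.range (n / 2 + 1),
    (n.choose (2 * k) : ℚ) * ((2 * k).choose k : ℚ) * ((a * c : ℤ) : ℚ) ^ k *
      ((b : ℚ)) ^ (n - 2 * k)

/-- The Laurent polynomial `a/x + b + c x` over `ℚ`. -/
noncomputable def Pq (a b c : ℚ) : LaurentPolynomial ℚ := C a * T (-1) + C b + C c * T 1

lemma Pq_mul_apply (a b c : ℚ) (f : LaurentPolynomial ℚ) (k : ℤ) :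
    (Pq a b c * f).coeff k = a * f.coeff (k + 1) + b * f.coeff k + c * f.coeff (k - 1) := by
  have h1 : (C a * T (-1) : LaurentPolynomial ℚ) = AddMonoidAlgebra.single (-1) a :=
    (single_eq_C_mul_T a (-1)).symm
  have h2 : (C b : LaurentPolynomial ℚ) = AddMonoidAlgebra.single 0 b := rfl
  have h3 : (C c * T 1 : LaurentPolynomial ℚ) = AddMonoidAlgebra.single 1 c :=
    (single_eq_C_mul_T c 1).symm
  rw [Pq, h1, h2, h3, add_mul, add_mul]
  rw [AddMonoidAlgebra.coeff_add, AddMonoidAlgebra.coeff_add, Finsupp.add_apply, Finsupp.add_apply]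
  rw [AddMonoidAlgebra.coeff_single_mul_apply, AddMonoidAlgebra.coeff_single_mul_apply,
    AddMonoidAlgebra.coeff_single_mul_apply]
  ring_nf

lemma Pq_symm (a b c : ℚ) (n : ℕ) : ∀ k : ℕ,
    a ^ k * (Pq a b c ^ n).coeff (k : ℤ) = c ^ k * (Pq a b c ^ n).coeff (-(k : ℤ)) := by
  induction n with
  | zero =>
    intro k
    have h1 : ((1 : LaurentPolynomial ℚ) : LaurentPolynomial ℚ) = AddMonoidAlgebra.single 0 1 :=
      single_zero_one_eq_one.symm
    cases k with
    | zero => norm_num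
    | succ m =>
      simp only [pow_zero, pow_succ, h1, AddMonoidAlgebra.coeff_single, Finsupp.single_apply]
      rw [if_neg (by omega), if_neg (by omega)]
      ring
  | succ n ih =>
    intro k
    rw [pow_succ', Pq_mul_apply, Pq_mul_apply]
    cases k with
    | zero => norm_num
    | succ m =>
      have e1 : ((m + 1 : ℕ) : ℤ) + 1 = ((m + 2 : ℕ) : ℤ) := by push_cast; ring
      have e2 : ((m + 1 : ℕ) : ℤ) - 1 = ((m : ℕ) : ℤ) := by push_cast; ring
      have e3 : -((m + 1 : ℕ) : ℤ) + 1 = -((m : ℕ) : ℤ) := by push_cast; ring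
      have e4 : -((m + 1 : ℕ) : ℤ) - 1 = -((m + 2 : ℕ) : ℤ) := by push_cast; ring
      rw [e1, e2, e3, e4]
      have i0 := ih m
      have i1 := ih (m + 1)
      have i2 := ih (m + 2)
      linear_combination i2 + b * i1 + a * c * i0

/-- coefficient of `(C a * T(-1) + C c * T 1) ^ j` at `0` -/
lemma x_pow_apply_zero (a c : ℚ) (j : ℕ) :
    ((C a * T (-1) + C c * T 1) ^ j : LaurentPolynomial ℚ).coeff 0 =
      if j % 2 = 0 then (j.choose (j / 2) : ℚ) * a ^ (j / 2) * c ^ (j / 2) else 0 := by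
  rw [add_pow]
  have hterm : ∀ i ∈ Finset.range (j + 1),
      ((C a * T (-1)) ^ i * (C c * T 1) ^ (j - i) * (j.choose i : LaurentPolynomial ℚ)) =
      AddMonoidAlgebra.single ((j : ℤ) - 2 * i) ((j.choose i : ℚ) * a ^ i * c ^ (j - i)) := by
    intro i hi
    have hij : i ≤ j := by simpa using Nat.lt_succ_iff.mp (Finset.mem_range.mp hi)
    have h1 : ((C a * T (-1)) ^ i : LaurentPolynomial ℚ) = C (a ^ i) * T (-(i : ℤ)) := by
      rw [mul_pow, ← map_pow, T_pow]; norm_num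
    have h2 : ((C c * T 1) ^ (j - i) : LaurentPolynomial ℚ) = C (c ^ (j - i)) * T ((j : ℤ) - i) := by
      rw [mul_pow, ← map_pow, T_pow, mul_one]
      congr 1
      push_cast [hij]
      ring
    have h3 : ((j.choose i : ℕ) : LaurentPolynomial ℚ) = C ((j.choose i : ℚ)) := by
      simp [map_natCast]
    rw [h1, h2, h3]
    rw [single_eq_C_mul_T]
    rw [mul_mul_mul_comm, ← map_mul, ← T_add]
    have h4 : -(i : ℤ) + ((j : ℤ) - i) = (j : ℤ) - 2 * i := by ring
    rw [h4, mul_right_comm, ← map_mul]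
    congr 1
    ring
  rw [Finset.sum_congr rfl hterm]
  rw [AddMonoidAlgebra.coeff_sum, Finsupp.finset_sum_apply]
  simp only [AddMonoidAlgebra.coeff_single, Finsupp.single_apply]
  rcases Nat.even_or_odd j with he | ho
  · obtain ⟨m, rfl⟩ := he
    rw [if_pos (by omega)]
    have : (m + m) / 2 = m := by omega
    rw [this]
    rw [Finset.sum_eq_single m]
    · rw [if_pos (by push_cast; ring)]
      have h5 : m + m - m = m := by omega
      rw [h5]
    · intro i hi him
      rw [if_neg (by push_cast; omega)]
    · intro h
      exact absurd (Finset.mem_range.mpr (by omega)) h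
  · obtain ⟨m, rfl⟩ := ho
    rw [if_neg (by omega)]
    apply Finset.sum_eq_zero
    intro i hi
    rw [if_neg (by push_cast; omega)]

lemma even_reindex (n : ℕ) (g : ℕ → ℚ) :
    ∑ j ∈ Finset.range (n + 1), (if j % 2 = 0 then g j else 0) =
      ∑ k ∈ Finset.range (n / 2 + 1), g (2 * k) := by
  rw [← Finset.sum_filter]
  symm
  apply Finset.sum_nbij' (i := fun k => 2 * k) (j := fun j => j / 2)
  · intro k hk
    simp only [Finset.mem_filter, Finset.mem_range] at *
    omega
  · intro j hj
    simp only [Finset.mem_filter, Finset.mem_range] at *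
    omega
  · intro k hk; omega
  · intro j hj
    simp only [Finset.mem_filter, Finset.mem_range] at hj
    omega
  · intro k hk; rfl

lemma Pq_apply_zero (a b c : ℤ) (n : ℕ) :
    (Pq (a : ℚ) (b : ℚ) (c : ℚ) ^ n).coeff 0 = genTrinomialQ a b c n := by
  have hP : Pq (a : ℚ) (b : ℚ) (c : ℚ) =
      (C (a : ℚ) * T (-1) + C (c : ℚ) * T 1) + C (b : ℚ) := by
    rw [Pq]; ring
  rw [hP, add_pow]
  rw [AddMonoidAlgebra.coeff_sum, Finsupp.finset_sum_apply]
  have hterm : ∀ j ∈ Finset.range (n + 1),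
      (((C (a : ℚ) * T (-1) + C (c : ℚ) * T 1) ^ j * C (b : ℚ) ^ (n - j) *
        (n.choose j : LaurentPolynomial ℚ)) : LaurentPolynomial ℚ).coeff 0 =
      if j % 2 = 0 then
        ((n.choose j : ℚ) * (j.choose (j / 2) : ℚ) * (a : ℚ) ^ (j / 2) * (c : ℚ) ^ (j / 2)
          * (b : ℚ) ^ (n - j)) else 0 := by
    intro j hj
    have hb : (C (b : ℚ) ^ (n - j) : LaurentPolynomial ℚ) = C ((b : ℚ) ^ (n - j)) := by
      rw [← map_pow]
    have hn : ((n.choose j : ℕ) : LaurentPolynomial ℚ) = C ((n.choose j : ℚ)) := by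
      simp [map_natCast]
    rw [hb, hn, mul_assoc, ← map_mul, mul_comm ((b:ℚ) ^ (n - j)) ((n.choose j : ℚ))]
    have := AddMonoidAlgebra.coeff_mul_single_apply
      (x := ((C (a : ℚ) * T (-1) + C (c : ℚ) * T 1) ^ j : LaurentPolynomial ℚ))
      (r := ((n.choose j : ℚ) * (b : ℚ) ^ (n - j))) (g := (0 : ℤ)) (h := (0 : ℤ))
    rw [show (C ((n.choose j : ℚ) * (b : ℚ) ^ (n - j)) : LaurentPolynomial ℚ)
        = AddMonoidAlgebra.single 0 ((n.choose j : ℚ) * (b : ℚ) ^ (n - j)) from rfl]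
    rw [this, neg_zero, add_zero, x_pow_apply_zero]
    split_ifs
    · ring
    · ring
  rw [Finset.sum_congr rfl hterm, even_reindex]
  rw [genTrinomialQ]
  apply Finset.sum_congr rfl
  intro k hk
  have h3 : 2 * k / 2 = k := by omega
  rw [h3]
  push_cast
  ring

theorem gen_trinomial_coeff_neg_one (a b c : ℤ) (hc : c ≠ 0) (n : ℕ) :
    ((((C (a : ℚ)) * T (-1) + C (b : ℚ) + C (c : ℚ) * T 1) ^ n : LaurentPolynomial ℚ).coeff (-1)) =
      (genTrinomialQ a b c (n + 1) - (b : ℚ) * genTrinomialQ a b c n) / (2 * (c : ℚ)) := by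
  have hcq : (c : ℚ) ≠ 0 := Int.cast_ne_zero.mpr hc
  show (Pq (a : ℚ) (b : ℚ) (c : ℚ) ^ n).coeff (-1) = _
  have h0 := Pq_apply_zero a b c n
  have h1 := Pq_apply_zero a b c (n + 1)
  have hrec : (Pq (a : ℚ) (b : ℚ) (c : ℚ) ^ (n + 1)).coeff 0 =
      (a : ℚ) * (Pq (a : ℚ) (b : ℚ) (c : ℚ) ^ n).coeff 1 +
      (b : ℚ) * (Pq (a : ℚ) (b : ℚ) (c : ℚ) ^ n).coeff 0 +
      (c : ℚ) * (Pq (a : ℚ) (b : ℚ) (c : ℚ) ^ n).coeff (-1) := by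
    rw [pow_succ', Pq_mul_apply]
    norm_num
  have hsym := Pq_symm (a : ℚ) (b : ℚ) (c : ℚ) n 1
  simp only [pow_one, Nat.cast_one] at hsym
  field_simp
  linear_combination h1 - hrec - hsym - (b : ℚ) * h0
end

section
/- Suppose B : ℕ → ℤ satisfies B(0) = 1 and the Lucas congruences B(pn+k) ≡ B(n)·B(k) (mod p) for all n ≥ 0 and 0 ≤ k ≤ p−1, for a prime p. Let α, β ∈ ℤ and define A(n) = α·B(n) + β·B(n+1). Then for all n ≥ 0 and 0 ≤ k ≤ p−1: A(pn+k) ≡ B(n)·A(k) (mod p) if k < p−1, and A(pn+(p−1)) ≡ B(n)·A(p−1) + A(n) − A(0)·B(n) (mod p). -/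
theorem shifted_lucas (p : ℕ) (hp : p.Prime) (B : ℕ → ℤ) (hB0 : B 0 = 1)
    (hB : ∀ n k : ℕ, k < p → B (p * n + k) ≡ B n * B k [ZMOD p])
    (α β : ℤ) (A : ℕ → ℤ) (hA : ∀ n, A n = α * B n + β * B (n + 1)) :
    (∀ n k : ℕ, k < p - 1 → A (p * n + k) ≡ B n * A k [ZMOD p]) ∧
    (∀ n : ℕ, A (p * n + (p - 1)) ≡ B n * A (p - 1) + A n - A 0 * B n [ZMOD p]) := by
  have hp2 : 2 ≤ p := hp.two_le
  constructor
  · intro n k hk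
    have h1 : B (p * n + k) ≡ B n * B k [ZMOD p] := hB n k (by omega)
    have h2 : B (p * n + k + 1) ≡ B n * B (k + 1) [ZMOD p] := by
      have := hB n (k + 1) (by omega)
      rwa [show p * n + (k + 1) = p * n + k + 1 by omega] at this
    rw [hA, hA]
    calc α * B (p * n + k) + β * B (p * n + k + 1)
        ≡ α * (B n * B k) + β * (B n * B (k + 1)) [ZMOD p] :=
          (h1.mul_left α).add (h2.mul_left β)
      _ = B n * (α * B k + β * B (k + 1)) := by ring
  · intro n
    have h1 : B (p * n + (p - 1)) ≡ B n * B (p - 1) [ZMOD p] := hB n (p - 1) (by omega)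
    have h2 : B (p * n + (p - 1) + 1) ≡ B (n + 1) [ZMOD p] := by
      have := hB (n + 1) 0 (by omega)
      rw [show p * (n + 1) + 0 = p * n + (p - 1) + 1 by rw [Nat.mul_succ]; omega] at this
      simpa [hB0] using this
    have h3 : B p ≡ B 1 [ZMOD p] := by
      have := hB 1 0 (by omega)
      simpa [hB0] using this
    have hP1 : p - 1 + 1 = p := by omega
    simp only [hA, hB0, hP1]
    calc α * B (p * n + (p - 1)) + β * B (p * n + (p - 1) + 1)
        ≡ α * (B n * B (p - 1)) + β * B (n + 1) [ZMOD p] :=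
          (h1.mul_left α).add (h2.mul_left β)
      _ = B n * (α * B (p - 1) + β * B 1) + (α * B n + β * B (n + 1))
            - (α * 1 + β * B 1) * B n := by ring
      _ ≡ B n * (α * B (p - 1) + β * B p) + (α * B n + β * B (n + 1))
            - (α * 1 + β * B 1) * B n [ZMOD p] := by
          exact (((h3.symm.mul_left β).add_left _).mul_left _).add_right _ |>.sub_right _
end

section
/- Let C(n) = binom(2n,n)/(n+1) denote the Catalan numbers. Then for every prime p, every n ≥ 0, and every k with 0 ≤ k ≤ p−2, C(pn+k) ≡ binom(2n,n)·C(k) (mod p). -/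
lemma catalan_int_eq (m : ℕ) :
    (catalan m : ℤ) = ((2 * m).choose m : ℤ) - ((2 * m).choose (m + 1) : ℤ) := by
  have h1 : ((m : ℤ) + 1) * catalan m = (2 * m).choose m := by
    have := succ_mul_catalan_eq_centralBinom m
    have h : (m : ℕ).centralBinom = (2 * m).choose m := rfl
    exact_mod_cast h ▸ this
  have h2 : ((2 * m).choose (m + 1) : ℤ) * ((m : ℤ) + 1) = ((2 * m).choose m : ℤ) * m := by
    have := Nat.choose_succ_right_eq (2 * m) m
    have h' : 2 * m - m = m := by omega
    rw [h'] at this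
    exact_mod_cast this
  have hpos : ((m : ℤ) + 1) ≠ 0 := by positivity
  have : ((m : ℤ) + 1) * (catalan m : ℤ) =
      ((m : ℤ) + 1) * (((2 * m).choose m : ℤ) - ((2 * m).choose (m + 1) : ℤ)) := by
    linear_combination h1 + h2
  exact mul_left_cancel₀ hpos this

theorem catalan_lucas_low (p : ℕ) (hp : p.Prime) (n k : ℕ) (hk : k < p - 1) :
    (catalan (p * n + k) : ℤ) ≡ ((2 * n).choose n : ℤ) * (catalan k : ℤ) [ZMOD p] := by
  haveI : Fact p.Prime := ⟨hp⟩
  have hp2 : 2 ≤ p := hp.two_le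
  set m := p * n + k with hm
  have hkp : k < p := by omega
  have hk1 : k + 1 < p := by omega
  have hmmod : m % p = k := by
    rw [hm, Nat.mul_add_mod, Nat.mod_eq_of_lt hkp]
  have hmdiv : m / p = n := by
    rw [hm, Nat.mul_add_div (by omega), Nat.div_eq_of_lt hkp, add_zero]
  have hm1mod : (m + 1) % p = k + 1 := by
    have : m + 1 = p * n + (k + 1) := by omega
    rw [this, Nat.mul_add_mod, Nat.mod_eq_of_lt hk1]
  have hm1div : (m + 1) / p = n := by
    have : m + 1 = p * n + (k + 1) := by omega
    rw [this, Nat.mul_add_div (by omega), Nat.div_eq_of_lt hk1, add_zero]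
  rw [catalan_int_eq, catalan_int_eq]
  rcases lt_or_ge (2 * k) p with h2k | h2k
  · -- low case: digits split cleanly
    have h2mod : (2 * m) % p = 2 * k := by
      have : 2 * m = p * (2 * n) + 2 * k := by rw [hm]; ring
      rw [this, Nat.mul_add_mod, Nat.mod_eq_of_lt h2k]
    have h2div : (2 * m) / p = 2 * n := by
      have : 2 * m = p * (2 * n) + 2 * k := by rw [hm]; ring
      rw [this, Nat.mul_add_div (by omega), Nat.div_eq_of_lt h2k, add_zero]
    have L1 := Choose.choose_modEq_choose_mod_mul_choose_div (p := p) (n := 2 * m) (k := m)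
    have L2 := Choose.choose_modEq_choose_mod_mul_choose_div (p := p) (n := 2 * m) (k := m + 1)
    rw [h2mod, h2div, hmmod, hmdiv] at L1
    rw [h2mod, h2div, hm1mod, hm1div] at L2
    calc ((2 * m).choose m : ℤ) - ((2 * m).choose (m + 1) : ℤ)
        ≡ ((2 * k).choose k : ℤ) * ((2 * n).choose n : ℤ) -
          ((2 * k).choose (k + 1) : ℤ) * ((2 * n).choose n : ℤ) [ZMOD p] := by
          exact Int.ModEq.sub (by simpa using L1) (by simpa using L2)
      _ = ((2 * n).choose n : ℤ) * (((2 * k).choose k : ℤ) - ((2 * k).choose (k + 1) : ℤ)) := by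
          ring
  · -- high case: both sides ≡ 0
    have hk2 : 2 * k - p < p := by omega
    have h2mod : (2 * m) % p = 2 * k - p := by
      have e1 : p * (2 * n + 1) = 2 * (p * n) + p := by ring
      have : 2 * m = p * (2 * n + 1) + (2 * k - p) := by rw [hm]; omega
      rw [this, Nat.mul_add_mod, Nat.mod_eq_of_lt hk2]
    have h2div : (2 * m) / p = 2 * n + 1 := by
      have e1 : p * (2 * n + 1) = 2 * (p * n) + p := by ring
      have : 2 * m = p * (2 * n + 1) + (2 * k - p) := by rw [hm]; omega
      rw [this, Nat.mul_add_div (by omega), Nat.div_eq_of_lt hk2, add_zero]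
    have L1 := Choose.choose_modEq_choose_mod_mul_choose_div (p := p) (n := 2 * m) (k := m)
    have L2 := Choose.choose_modEq_choose_mod_mul_choose_div (p := p) (n := 2 * m) (k := m + 1)
    rw [h2mod, h2div, hmmod, hmdiv] at L1
    rw [h2mod, h2div, hm1mod, hm1div] at L2
    have z1 : (2 * k - p).choose k = 0 := Nat.choose_eq_zero_of_lt (by omega)
    have z2 : (2 * k - p).choose (k + 1) = 0 := Nat.choose_eq_zero_of_lt (by omega)
    rw [z1] at L1
    rw [z2] at L2
    -- RHS: catalan k ≡ 0
    have hk2mod : (2 * k) % p = 2 * k - p := by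
      conv_lhs => rw [show 2 * k = p * 1 + (2 * k - p) by omega]
      rw [Nat.mul_add_mod, Nat.mod_eq_of_lt hk2]
    have hk2div : (2 * k) / p = 1 :=
      Nat.div_eq_of_lt_le (by omega) (by omega)
    have R1 := Choose.choose_modEq_choose_mod_mul_choose_div (p := p) (n := 2 * k) (k := k)
    have R2 := Choose.choose_modEq_choose_mod_mul_choose_div (p := p) (n := 2 * k) (k := k + 1)
    rw [hk2mod, hk2div, Nat.mod_eq_of_lt hkp, Nat.div_eq_of_lt hkp, z1] at R1
    rw [hk2mod, hk2div, Nat.mod_eq_of_lt hk1, Nat.div_eq_of_lt hk1, z2] at R2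
    simp only [Nat.zero_mul, Nat.cast_zero] at L1 L2 R1 R2
    calc ((2 * m).choose m : ℤ) - ((2 * m).choose (m + 1) : ℤ)
        ≡ 0 - 0 [ZMOD p] := Int.ModEq.sub (by simpa using L1) (by simpa using L2)
      _ = ((2 * n).choose n : ℤ) * (0 - 0) := by ring
      _ ≡ ((2 * n).choose n : ℤ) * (((2 * k).choose k : ℤ) - ((2 * k).choose (k + 1) : ℤ))
          [ZMOD p] := Int.ModEq.mul_left _
            (Int.ModEq.sub (by simpa using R1.symm) (by simpa using R2.symm))
end

section
/- Let C(n) = binom(2n,n)/(n+1) denote the Catalan numbers. Then for every prime p and every n ≥ 0, C(pn + (p−1)) ≡ −(2n+1)·C(n) (mod p). -/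
open Nat

lemma catalan_eq_choose_sub (m : ℕ) :
    (catalan m : ℤ) = Nat.choose (2 * m) m - Nat.choose (2 * m) (m + 1) := by
  have h1 : (m + 1) * catalan m = m.centralBinom := succ_mul_catalan_eq_centralBinom m
  have h2 : Nat.choose (2 * m) (m + 1) * (m + 1) = Nat.choose (2 * m) m * m := by
    have := Nat.choose_succ_right_eq (2 * m) m
    simpa [two_mul] using this
  have h1' : ((m : ℤ) + 1) * catalan m = Nat.choose (2 * m) m := by
    exact_mod_cast congrArg (Nat.cast : ℕ → ℤ) (h1.trans (by rw [Nat.centralBinom]))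
  have h2' : (Nat.choose (2 * m) (m + 1) : ℤ) * (m + 1) = Nat.choose (2 * m) m * m := by
    exact_mod_cast h2
  have hm1 : ((m : ℤ) + 1) ≠ 0 := by positivity
  have h3 : ((m : ℤ) + 1) * ((Nat.choose (2 * m) m : ℤ) - Nat.choose (2 * m) (m + 1))
      = Nat.choose (2 * m) m := by linear_combination -h2'
  exact mul_left_cancel₀ hm1 (h1'.trans h3.symm)

lemma two_n_one_mul_catalan (n : ℕ) :
    (2 * n + 1) * catalan n = Nat.choose (2 * n + 1) (n + 1) := by
  have h1 : (n + 1) * catalan n = n.centralBinom := succ_mul_catalan_eq_centralBinom n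
  have h2 : (2 * n + 1) * Nat.choose (2 * n) n = Nat.choose (2 * n + 1) (n + 1) * (n + 1) :=
    Nat.add_one_mul_choose_eq (2 * n) n
  have hcb : n.centralBinom = Nat.choose (2 * n) n := by rw [Nat.centralBinom]
  apply Nat.eq_of_mul_eq_mul_right (Nat.succ_pos n)
  calc (2 * n + 1) * catalan n * (n + 1) = (2 * n + 1) * ((n + 1) * catalan n) := by ring
    _ = (2 * n + 1) * Nat.choose (2 * n) n := by rw [h1, hcb]
    _ = Nat.choose (2 * n + 1) (n + 1) * (n + 1) := h2

theorem catalan_lucas_top (p : ℕ) (hp : p.Prime) (n : ℕ) :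
    (catalan (p * n + (p - 1)) : ℤ) ≡ -(2 * n + 1) * (catalan n : ℤ) [ZMOD p] := by
  haveI : Fact p.Prime := ⟨hp⟩
  have hp2 : 2 ≤ p := hp.two_le
  set m := p * n + (p - 1) with hm
  have e1 : p * (2 * n + 1) = 2 * (p * n) + p := by ring
  have e2 : p * (n + 1) = p * n + p := by ring
  have hmod1 : (2 * m) % p = p - 2 := by
    have : 2 * m = p * (2 * n + 1) + (p - 2) := by omega
    rw [this, Nat.mul_add_mod, Nat.mod_eq_of_lt (by omega)]
  have hdiv1 : (2 * m) / p = 2 * n + 1 := by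
    have : 2 * m = p * (2 * n + 1) + (p - 2) := by omega
    rw [this, Nat.mul_add_div (by omega), Nat.div_eq_of_lt (by omega), Nat.add_zero]
  have hmod2 : m % p = p - 1 := by
    rw [hm, Nat.mul_add_mod, Nat.mod_eq_of_lt (by omega)]
  have hdiv2 : m / p = n := by
    rw [hm, Nat.mul_add_div (by omega), Nat.div_eq_of_lt (by omega), Nat.add_zero]
  have hmod3 : (m + 1) % p = 0 := by
    have : m + 1 = p * (n + 1) := by omega
    rw [this, Nat.mul_mod_right]
  have hdiv3 : (m + 1) / p = n + 1 := by
    have : m + 1 = p * (n + 1) := by omega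
    rw [this, Nat.mul_div_cancel_left (n + 1) (show 0 < p by omega)]
  have L1 : (Nat.choose (2 * m) m : ℤ) ≡ 0 [ZMOD p] := by
    have := Choose.choose_modEq_choose_mod_mul_choose_div (p := p) (n := 2 * m) (k := m)
    rw [hmod1, hdiv1, hmod2, hdiv2] at this
    have hz : Nat.choose (p - 2) (p - 1) = 0 := Nat.choose_eq_zero_of_lt (by omega)
    rw [hz] at this
    simpa using this
  have L2 : (Nat.choose (2 * m) (m + 1) : ℤ) ≡ (Nat.choose (2 * n + 1) (n + 1) : ℤ) [ZMOD p] := by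
    have := Choose.choose_modEq_choose_mod_mul_choose_div (p := p) (n := 2 * m) (k := m + 1)
    rw [hmod1, hdiv1, hmod3, hdiv3] at this
    simpa using this
  have key : (catalan m : ℤ) ≡ -(Nat.choose (2 * n + 1) (n + 1) : ℤ) [ZMOD p] := by
    rw [catalan_eq_choose_sub m]
    have := L1.sub L2
    simpa using this
  have hid : ((2 * n + 1 : ℕ) : ℤ) * (catalan n : ℤ) = (Nat.choose (2 * n + 1) (n + 1) : ℤ) := by
    exact_mod_cast congrArg (Nat.cast : ℕ → ℤ) (two_n_one_mul_catalan n)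
  calc (catalan m : ℤ) ≡ -(Nat.choose (2 * n + 1) (n + 1) : ℤ) [ZMOD p] := key
    _ = -(2 * n + 1) * (catalan n : ℤ) := by rw [← hid]; push_cast; ring
end

section
/- Let C(n) be the Catalan numbers and p a prime. Suppose the base-p expansion of n is such that its lowest m digits all equal p−1, the next digit is n_0 ≠ p−1, and the remaining digits are n_1, …, n_r (i.e. n = (p−1)(1+p+⋯+p^{m−1}) + p^m(n_0 + n_1 p + ⋯ + n_r p^r)). Then C(n) ≡ δ·C(n_0)·binom(2n_1,n_1)···binom(2n_r,n_r) (mod p), where δ = 1 if m = 0 and δ = −(2n_0+1) if m ≥ 1. -/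
open Finset

section Aux

variable {p : ℕ}

/-- Lucas step as an equality in `ZMod p`. -/
private lemma lucasZ (hp : p.Prime) (n k : ℕ) :
    ((n.choose k : ZMod p)) =
      (((n % p).choose (k % p) : ℕ) : ZMod p) * (((n / p).choose (k / p) : ℕ) : ZMod p) := by
  haveI := Fact.mk hp
  have h := Choose.choose_modEq_choose_mod_mul_choose_div (n := n) (k := k) (p := p)
  have h2 := (ZMod.intCast_eq_intCast_iff _ _ _).mpr h
  push_cast at h2 ⊢
  exact h2

private lemma centralBinom_add (hp : p.Prime) {a : ℕ} (b : ℕ) (ha : a < p) :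
    (((a + p * b).centralBinom : ZMod p)) = (a.centralBinom : ZMod p) * (b.centralBinom : ZMod p) := by
  have hp0 : 0 < p := hp.pos
  have hmod : (a + p * b) % p = a := by
    rw [Nat.add_mul_mod_self_left, Nat.mod_eq_of_lt ha]
  have hdiv : (a + p * b) / p = b := by
    rw [Nat.add_mul_div_left _ _ hp0, Nat.div_eq_of_lt ha, Nat.zero_add]
  rcases lt_or_ge (2 * a) p with h2 | h2
  · have he : 2 * (a + p * b) = 2 * a + p * (2 * b) := by ring
    have hmod2 : (2 * (a + p * b)) % p = 2 * a := by
      rw [he, Nat.add_mul_mod_self_left, Nat.mod_eq_of_lt h2]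
    have hdiv2 : (2 * (a + p * b)) / p = 2 * b := by
      rw [he, Nat.add_mul_div_left _ _ hp0, Nat.div_eq_of_lt h2, Nat.zero_add]
    rw [Nat.centralBinom, lucasZ hp, hmod, hdiv, hmod2, hdiv2,
      Nat.centralBinom, Nat.centralBinom]
  · have he : 2 * (a + p * b) = (2 * a - p) + p * (2 * b + 1) := by
      have h4 : 2 * a - p + p = 2 * a := Nat.sub_add_cancel h2
      calc 2 * (a + p * b) = 2 * a + 2 * (p * b) := by ring
        _ = (2 * a - p) + (p + 2 * (p * b)) := by omega
        _ = (2 * a - p) + p * (2 * b + 1) := by ring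
    have hlt : 2 * a - p < p := by omega
    have hmod2 : (2 * (a + p * b)) % p = 2 * a - p := by
      rw [he, Nat.add_mul_mod_self_left, Nat.mod_eq_of_lt hlt]
    have hdiv2 : (2 * (a + p * b)) / p = 2 * b + 1 := by
      rw [he, Nat.add_mul_div_left _ _ hp0, Nat.div_eq_of_lt hlt, Nat.zero_add]
    have hz : (2 * a - p).choose a = 0 := Nat.choose_eq_zero_of_lt (by omega)
    have hamod : (2 * a) % p = 2 * a - p := by
      rw [Nat.mod_eq_sub_mod h2, Nat.mod_eq_of_lt (by omega)]
    have hadiv : (2 * a) / p = 1 := Nat.div_eq_of_lt_le (by omega) (by omega)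
    have hca : ((a.centralBinom : ZMod p)) = 0 := by
      rw [Nat.centralBinom, lucasZ hp, hamod, Nat.mod_eq_of_lt ha, hz]
      simp
    rw [Nat.centralBinom, lucasZ hp, hmod2, hdiv2, hmod, hdiv, hz, hca]
    simp

private lemma centralBinom_digits (hp : p.Prime) :
    ∀ (r : ℕ) (d : ℕ → ℕ), (∀ i ≤ r, d i < p) →
      (((∑ i ∈ range (r + 1), d i * p ^ i).centralBinom : ZMod p)) =
        ∏ i ∈ range (r + 1), ((d i).centralBinom : ZMod p) := by
  intro r
  induction r with
  | zero => intro d _; simp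
  | succ r ih =>
    intro d hd
    have hsum : ∑ i ∈ range (r + 2), d i * p ^ i
        = d 0 + p * ∑ i ∈ range (r + 1), d (i + 1) * p ^ i := by
      rw [Finset.sum_range_succ' (fun i => d i * p ^ i), Finset.mul_sum]
      simp only [pow_zero, mul_one]
      rw [add_comm]
      congr 1
      refine Finset.sum_congr rfl fun i _ => ?_
      ring
    rw [hsum, centralBinom_add hp _ (hd 0 (Nat.zero_le _)),
      ih (fun i => d (i + 1)) (fun i hi => hd (i + 1) (by omega)),
      Finset.prod_range_succ' (fun i => ((d i).centralBinom : ZMod p))]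
    ring

private lemma castM (hp : p.Prime) (r : ℕ) (d : ℕ → ℕ) :
    (((∑ i ∈ range (r + 1), d i * p ^ i : ℕ)) : ZMod p) = (d 0 : ZMod p) := by
  push_cast
  rw [Finset.sum_range_succ' (fun i => (d i : ZMod p) * (p : ZMod p) ^ i)]
  simp [ZMod.natCast_self, zero_pow]

private lemma range_split (r : ℕ) : range (r + 1) = insert 0 (Finset.Icc 1 r) := by
  ext x
  simp only [Finset.mem_range, Finset.mem_insert, Finset.mem_Icc]
  omega

private lemma catalan_m0 (hp : p.Prime) (r : ℕ) (d : ℕ → ℕ) (hd : ∀ i ≤ r, d i < p)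
    (hd0 : d 0 ≠ p - 1) :
    ((catalan (∑ i ∈ range (r + 1), d i * p ^ i) : ZMod p)) =
      (catalan (d 0) : ZMod p) * ∏ i ∈ Finset.Icc 1 r, ((d i).centralBinom : ZMod p) := by
  haveI := Fact.mk hp
  set M := ∑ i ∈ range (r + 1), d i * p ^ i with hM
  have hkey : ((M : ZMod p) + 1) * (catalan M : ZMod p) = ((M.centralBinom : ℕ) : ZMod p) := by
    have := succ_mul_catalan_eq_centralBinom M
    calc ((M : ZMod p) + 1) * (catalan M : ZMod p) = (((M + 1) * catalan M : ℕ) : ZMod p) := by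
          push_cast; ring
      _ = _ := by rw [this]
  have hd0lt : d 0 < p := hd 0 (Nat.zero_le _)
  have hu : ((d 0 : ZMod p) + 1) ≠ 0 := by
    have : (((d 0 + 1 : ℕ)) : ZMod p) ≠ 0 := by
      rw [Ne, ZMod.natCast_eq_zero_iff]
      intro hdvd
      have := Nat.le_of_dvd (by omega) hdvd
      have := hp.two_le
      omega
    push_cast at this
    exact this
  have hkey0 : ((d 0 : ZMod p) + 1) * (catalan (d 0) : ZMod p) = ((d 0).centralBinom : ZMod p) := by
    have := succ_mul_catalan_eq_centralBinom (d 0)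
    calc ((d 0 : ZMod p) + 1) * (catalan (d 0) : ZMod p)
        = (((d 0 + 1) * catalan (d 0) : ℕ) : ZMod p) := by push_cast; ring
      _ = _ := by rw [this]
  have hprod : ((M.centralBinom : ℕ) : ZMod p)
      = ((d 0).centralBinom : ZMod p) * ∏ i ∈ Finset.Icc 1 r, ((d i).centralBinom : ZMod p) := by
    rw [hM, centralBinom_digits hp r d hd, range_split,
      Finset.prod_insert (by simp)]
  apply mul_left_cancel₀ hu
  rw [← castM hp r d] at hu ⊢
  rw [hkey, hprod, ← mul_assoc]
  rw [castM hp r d, hkey0]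

private lemma choose_pow_reduce (hp : p.Prime) :
    ∀ m (K : ℕ), 0 < K →
      (((2 * (p ^ m * K) - 1).choose (p ^ m * K) : ZMod p)) = ((2 * K - 1).choose K : ZMod p) := by
  intro m
  induction m with
  | zero => intro K _; simp
  | succ m ih =>
    intro K hK
    have hp0 := hp.pos
    have hq : 0 < p ^ m * K := Nat.mul_pos (Nat.pow_pos (n := m) hp0) hK
    set q := p ^ m * K with hqdef
    have hpK : p ^ (m + 1) * K = p * q := by rw [hqdef]; ring
    have key : 2 * (p * q) - 1 = (p - 1) + p * (2 * q - 1) := by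
      rw [Nat.mul_sub, mul_one]
      have h2 : p * (2 * q) = 2 * (p * q) := by ring
      have h3 : p ≤ p * q := Nat.le_mul_of_pos_right p hq
      omega
    have hmodn : (2 * (p * q) - 1) % p = p - 1 := by
      rw [key, Nat.add_mul_mod_self_left, Nat.mod_eq_of_lt (by omega)]
    have hdivn : (2 * (p * q) - 1) / p = 2 * q - 1 := by
      rw [key, Nat.add_mul_div_left _ _ hp0, Nat.div_eq_of_lt (by omega), Nat.zero_add]
    have hmodk : (p * q) % p = 0 := Nat.mul_mod_right p q
    have hdivk : (p * q) / p = q := Nat.mul_div_cancel_left q hp0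
    rw [hpK, lucasZ hp, hmodn, hdivn, hmodk, hdivk, Nat.choose_zero_right, ih K hK]
    simp

private lemma two_mul_catalan (n : ℕ) : (2 * n + 1) * catalan n = (2 * n + 1).choose (n + 1) := by
  have h1 := Nat.add_one_mul_choose_eq (2 * n) n
  have h2 := succ_mul_catalan_eq_centralBinom n
  rw [Nat.centralBinom_eq_two_mul_choose] at h2
  apply Nat.eq_of_mul_eq_mul_left (Nat.succ_pos n)
  calc (n + 1) * ((2 * n + 1) * catalan n) = (2 * n + 1) * ((n + 1) * catalan n) := by ring
    _ = (2 * n + 1) * ((2 * n).choose n) := by rw [h2]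
    _ = (2 * n + 1).choose (n + 1) * (n + 1) := h1
    _ = (n + 1) * ((2 * n + 1).choose (n + 1)) := by ring

private lemma geom_nat (p m : ℕ) (hp : 1 ≤ p) :
    (p - 1) * (∑ i ∈ Finset.range m, p ^ i) + 1 = p ^ m := by
  obtain ⟨q, rfl⟩ : ∃ q, p = q + 1 := ⟨p - 1, by omega⟩
  simp only [Nat.add_sub_cancel]
  induction m with
  | zero => simp
  | succ m ih =>
    rw [Finset.sum_range_succ, Nat.mul_add]
    have h : (q + 1) ^ (m + 1) = (q + 1) ^ m + q * (q + 1) ^ m := by ring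
    omega

end Aux

theorem catalan_digits (p : ℕ) (hp : p.Prime) (m r : ℕ) (d : ℕ → ℕ)
    (hd : ∀ i ≤ r, d i < p) (hd0 : d 0 ≠ p - 1) (n : ℕ)
    (hn : n = (p - 1) * (∑ i ∈ Finset.range m, p ^ i) +
      p ^ m * (∑ i ∈ Finset.range (r + 1), d i * p ^ i)) :
    (catalan n : ℤ) ≡
      (if m = 0 then 1 else -(2 * (d 0 : ℤ) + 1)) * (catalan (d 0) : ℤ) *
        ∏ i ∈ Finset.Icc 1 r, (((2 * d i).choose (d i) : ℤ)) [ZMOD p] := by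
  haveI := Fact.mk hp
  rw [← ZMod.intCast_eq_intCast_iff]
  set M := ∑ i ∈ Finset.range (r + 1), d i * p ^ i with hMdef
  have hcb : ∀ i, ((d i).centralBinom : ZMod p) = (((2 * d i).choose (d i) : ℕ) : ZMod p) := by
    intro i; rw [Nat.centralBinom_eq_two_mul_choose]
  have hcat := catalan_m0 hp r d hd hd0
  rcases Nat.eq_zero_or_pos m with hm | hm
  · subst hm
    simp only [if_pos rfl]
    have hnM : n = M := by simp [hn, hMdef]
    push_cast
    rw [hnM, hcat]
    rw [Finset.prod_congr rfl (fun i _ => hcb i)]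
    push_cast
    ring
  · rw [if_neg (by omega)]
    -- n + 1 = p ^ m * (M + 1)
    have hg := geom_nat p m hp.one_le
    have hn1 : n + 1 = p ^ m * (M + 1) := by
      have h : p ^ m * (M + 1) = p ^ m * M + p ^ m := by ring
      omega
    have h2n1 : 2 * n + 1 = 2 * (p ^ m * (M + 1)) - 1 := by omega
    have hred : (((2 * n + 1).choose (n + 1) : ℕ) : ZMod p)
        = (((2 * (M + 1) - 1).choose (M + 1) : ℕ) : ZMod p) := by
      rw [hn1, h2n1]
      exact choose_pow_reduce hp m (M + 1) (by omega)
    have hMs : 2 * (M + 1) - 1 = 2 * M + 1 := by omega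
    rw [hMs] at hred
    -- cast of n is -1
    obtain ⟨m', rfl⟩ : ∃ m', m = m' + 1 := ⟨m - 1, by omega⟩
    have hnz : ((n : ℕ) : ZMod p) = -1 := by
      rw [hn]
      push_cast [Nat.cast_sub hp.one_le]
      rw [ZMod.natCast_self]
      rw [Finset.sum_range_succ' (fun i => (0 : ZMod p) ^ i)]
      simp [zero_pow]
    have hid : ((2 * n + 1 : ℕ) : ZMod p) * (catalan n : ZMod p)
        = (((2 * n + 1).choose (n + 1) : ℕ) : ZMod p) := by
      rw [← Nat.cast_mul, two_mul_catalan n]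
    have hidM : ((2 * M + 1 : ℕ) : ZMod p) * (catalan M : ZMod p)
        = (((2 * M + 1).choose (M + 1) : ℕ) : ZMod p) := by
      rw [← Nat.cast_mul, two_mul_catalan M]
    have hcast2n : ((2 * n + 1 : ℕ) : ZMod p) = -1 := by push_cast [hnz]; ring
    have hcastM : ((2 * M + 1 : ℕ) : ZMod p) = 2 * (d 0 : ZMod p) + 1 := by
      push_cast
      rw [hMdef] at *
      rw [show ((∑ i ∈ Finset.range (r + 1), d i * p ^ i : ℕ) : ZMod p) = (d 0 : ZMod p)
        from castM hp r d]
    rw [hcast2n] at hid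
    rw [hcastM] at hidM
    have : -(catalan n : ZMod p) = (2 * (d 0 : ZMod p) + 1) *
        ((catalan (d 0) : ZMod p) * ∏ i ∈ Finset.Icc 1 r, ((d i).centralBinom : ZMod p)) := by
      calc -(catalan n : ZMod p) = (((2 * n + 1).choose (n + 1) : ℕ) : ZMod p) := by
            rw [← hid]; ring
        _ = (((2 * M + 1).choose (M + 1) : ℕ) : ZMod p) := hred
        _ = (2 * (d 0 : ZMod p) + 1) * (catalan M : ZMod p) := hidM.symm
        _ = _ := by rw [hcat]
    push_cast
    rw [Finset.prod_congr rfl (fun i _ => (hcb i).symm)]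
    push_cast at this ⊢
    linear_combination -this
end
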